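/- arXiv:1709.10128 — 3 statements merged into one kernel-verified Lean document; each statement's English description precedes it below -/
import Mathlib

section
/- For any number of channels K ≥ 2, any horizon T ≥ K·ln K, any fixed assignment of rewards x_t(j) ∈ [0,1] for t = 1,…,T and j = 1,…,K, and any learning rate η with 0 < η ≤ (ln K/(K²·T))^{1/3}, the expected regret of the POLA algorithm satisfies G_max − E[G_POLA] ≤ (e−2)·η·K·( (3/4)·((T+1)⁴/(K·ln K))^{1/3} + (K·ln K)/4 ) + (ln K)/η + (3/2)·(K·T²·ln K)^{1/3}, where G_max = max_j ∑_{t=1}^T x_t(j) and G_POLA = ∑_{t=1}^T R_t with R_t the reward collected by POLA at round t (R_t = x_t(I_t) if round t is an attack round with attacked channel I_t, and R_t = 0 if round t is an observation round), and the expectation is over the internal randomness of POLA. -/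
/-!
Model of the POLA algorithm.  There are `K` channels and `T` time slots with
rewards `x t j ∈ [0,1]` (round `t+1` of the paper is indexed by
`t ∈ {0,…,T-1}`).  The randomness that influences the evolution of the
weights is, per round, whether the round is an observation round and, in that
case, which channel was observed.  We encode this by a history
`c : Fin T → Option (Fin K)`, where `c t = some j` means round `t` was an
observation round with observed channel `j`, and `c t = none` means round `t`
was an attack round (the attacked channel does not affect the weights).
-/

/-- The POLA observation probability `δ_t = min{1, (K·ln K/t)^{1/3}}` of
round `t+1` (0-based index `t`). -/
noncomputable def polaDelta (K t : ℕ) : ℝ :=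
  min 1 (((K : ℝ) * Real.log K / ((t : ℝ) + 1)) ^ ((1 : ℝ) / 3))

/-- Weights of POLA along a history `c`: `w 0 i = 1`; on an observation round
with observed channel `j'`, `w (t+1) j = w t j · exp(η·x̂ t j)` with
`x̂ t j = x t j · K/δ_t` if `j = j'` and `0` otherwise; on an attack round the
weights are unchanged. -/
noncomputable def polaWeight (K T : ℕ) (x : ℕ → Fin K → ℝ) (η : ℝ)
    (c : Fin T → Option (Fin K)) : ℕ → Fin K → ℝ
  | 0 => fun _ => 1
  | t + 1 => fun j =>
      polaWeight K T x η c t j *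
        Real.exp (η *
          (if h : t < T then
            (match c ⟨t, h⟩ with
             | some j' => if j' = j then x t j * (K : ℝ) / polaDelta K t else 0
             | none => 0)
          else 0))

/-- POLA attack distribution `p t i = w t i / ∑ j, w t j`. -/
noncomputable def polaP (K T : ℕ) (x : ℕ → Fin K → ℝ) (η : ℝ)
    (c : Fin T → Option (Fin K)) (t : ℕ) (i : Fin K) : ℝ :=
  polaWeight K T x η c t i / ∑ j, polaWeight K T x η c t j

/-- Probability of the history `c`: with probability `δ_t` the round is an
observation round and the observed channel is uniform among the `K` channels
(probability `δ_t·(1/K)` for each), and with probability `1 − δ_t` it is an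
attack round. -/
noncomputable def polaHistProb (K T : ℕ) (c : Fin T → Option (Fin K)) : ℝ :=
  ∏ t : Fin T,
    (match c t with
     | some _ => polaDelta K (t : ℕ) * (1 / (K : ℝ))
     | none => 1 - polaDelta K (t : ℕ))

/-- Expected total reward `E[G_POLA] = E[∑_t R_t]`, where `R_t = x t (I_t)`
with `I_t ∼ p_t` on attack rounds and `R_t = 0` on observation rounds: given
a history, the conditional expectation of the reward of an attack round `t`
is `∑ i, p t i · x t i`. -/
noncomputable def polaGain (K T : ℕ) (x : ℕ → Fin K → ℝ) (η : ℝ) : ℝ :=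
  ∑ c : Fin T → Option (Fin K), polaHistProb K T c *
      ∑ t : Fin T,
        (match c t with
         | none => ∑ i, polaP K T x η c (t : ℕ) i * x (t : ℕ) i
         | some _ => 0)


open Finset

section PolaAux

lemma pola_exp_quad {z : ℝ} (h0 : 0 ≤ z) (h1 : z ≤ 1) :
    Real.exp z ≤ 1 + z + (Real.exp 1 - 2) * z ^ 2 := by
  have hexp : ∀ y : ℝ, Real.exp y = ∑' n : ℕ, y ^ n / n.factorial := by
    intro y
    rw [Real.exp_eq_exp_ℝ, NormedSpace.exp_eq_tsum_div]
  have hsummable : ∀ y : ℝ, Summable (fun n : ℕ => y ^ n / n.factorial) :=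
    fun y => Real.summable_pow_div_factorial y
  have hs2 : ∀ y : ℝ, Summable (fun n : ℕ => y ^ (n + 2) / (n + 2).factorial) := by
    intro y
    exact (summable_nat_add_iff 2).2 (hsummable y)
  have hsplit : ∀ y : ℝ, Real.exp y = 1 + y + ∑' n : ℕ, y ^ (n + 2) / (n + 2).factorial := by
    intro y
    have := Summable.sum_add_tsum_nat_add 2 (hsummable y)
    rw [hexp y, ← this]
    simp [Finset.sum_range_succ]
  rw [hsplit z, hsplit 1]
  have h1' : ∑' n : ℕ, (1:ℝ) ^ (n + 2) / (n + 2).factorial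
      = ∑' n : ℕ, (1:ℝ) / (n + 2).factorial := by simp
  rw [h1']
  have key : ∑' n : ℕ, z ^ (n + 2) / (n + 2).factorial
      ≤ z ^ 2 * ∑' n : ℕ, (1:ℝ) / (n + 2).factorial := by
    rw [← tsum_mul_left]
    apply Summable.tsum_le_tsum _ (hs2 z)
    · exact Summable.mul_left _ ((summable_nat_add_iff 2).2 (hsummable 1) |>.congr (by simp))
    · intro n
      rw [pow_add]
      have hf : (0:ℝ) < (n + 2).factorial := by positivity
      calc z ^ n * z ^ 2 / (n+2).factorial ≤ 1 * z ^ 2 / (n+2).factorial := by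
            gcongr
            exact pow_le_one₀ h0 h1
        _ = z ^ 2 * (1 / (n+2).factorial) := by ring
  nlinarith [key, sq_nonneg z]

lemma pola_mass_one {T : ℕ} {O : Type*} [Fintype O] [DecidableEq O] (ν : Fin T → O → ℝ)
    (hν : ∀ t, ∑ o, ν t o = 1) : ∑ c : Fin T → O, ∏ s, ν s (c s) = 1 := by
  rw [← Fintype.prod_sum (fun (t : Fin T) (o : O) => ν t o)]
  simp [hν]

lemma pola_factor_lemma {T : ℕ} {O : Type*} [Fintype O] [DecidableEq O] [Nonempty O]
    (ν : Fin T → O → ℝ) (hν : ∀ s, ∑ o, ν s o = 1) (t : Fin T)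
    (g : (Fin T → O) → ℝ) (h : O → ℝ)
    (hg : ∀ c c' : Fin T → O, (∀ s, s ≠ t → c s = c' s) → g c = g c') :
    ∑ c : Fin T → O, (∏ s, ν s (c s)) * (g c * h (c t)) =
      (∑ o, ν t o * h o) * ∑ c : Fin T → O, (∏ s, ν s (c s)) * g c := by
  classical
  set e := Equiv.funSplitAt t O with he
  have hsum : ∀ F : (Fin T → O) → ℝ, ∑ c : Fin T → O, F c
      = ∑ o : O, ∑ r : ({ s : Fin T // s ≠ t } → O), F (e.symm (o, r)) := by
    intro F
    rw [← Equiv.sum_comp e.symm F, Fintype.sum_prod_type]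
  have hval_t : ∀ (o : O) (r : { s : Fin T // s ≠ t } → O), e.symm (o, r) t = o := by
    intro o r; simp [he, Equiv.funSplitAt, Equiv.piSplitAt]
  have hval_ne : ∀ (o : O) (r : { s : Fin T // s ≠ t } → O) (s : Fin T) (hs : s ≠ t),
      e.symm (o, r) s = r ⟨s, hs⟩ := by
    intro o r s hs; simp [he, Equiv.funSplitAt, Equiv.piSplitAt, hs]
  have hprod : ∀ (o : O) (r : { s : Fin T // s ≠ t } → O),
      (∏ s, ν s (e.symm (o, r) s)) = ν t o * ∏ s : { s : Fin T // s ≠ t }, ν s (r s) := by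
    intro o r
    rw [← Finset.mul_prod_erase univ _ (mem_univ t), hval_t]
    congr 1
    rw [Finset.prod_subtype (univ.erase t) (p := fun s => s ≠ t) (by simp)
      (fun s => ν s (e.symm (o, r) s))]
    exact Finset.prod_congr rfl (fun s _ => by rw [hval_ne o r s s.2])
  obtain ⟨o₀⟩ := ‹Nonempty O›
  have hgr : ∀ (o : O) (r : { s : Fin T // s ≠ t } → O),
      g (e.symm (o, r)) = g (e.symm (o₀, r)) := by
    intro o r
    apply hg
    intro s hs
    rw [hval_ne o r s hs, hval_ne o₀ r s hs]
  rw [hsum, hsum (fun c => (∏ s, ν s (c s)) * g c)]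
  simp only [hprod, hval_t, hgr]
  set B := ∑ r : { s : Fin T // s ≠ t } → O,
      (∏ s : { s : Fin T // s ≠ t }, ν s (r s)) * g (e.symm (o₀, r)) with hB
  have lhs_eq : ∑ o : O, ∑ r : { s : Fin T // s ≠ t } → O,
      ν t o * (∏ s : { s : Fin T // s ≠ t }, ν s (r s)) * (g (e.symm (o₀, r)) * h o)
      = (∑ o : O, ν t o * h o) * B := by
    rw [Finset.sum_mul]
    refine Finset.sum_congr rfl fun o _ => ?_
    rw [hB, Finset.mul_sum]
    exact Finset.sum_congr rfl fun r _ => by ring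
  have rhs_eq : ∑ o : O, ∑ r : { s : Fin T // s ≠ t } → O,
      ν t o * (∏ s : { s : Fin T // s ≠ t }, ν s (r s)) * g (e.symm (o₀, r)) = B := by
    have : ∀ o : O, ∑ r : { s : Fin T // s ≠ t } → O,
        ν t o * (∏ s : { s : Fin T // s ≠ t }, ν s (r s)) * g (e.symm (o₀, r))
        = ν t o * B := by
      intro o
      rw [hB, Finset.mul_sum]
      exact Finset.sum_congr rfl fun r _ => by ring
    simp only [this, ← Finset.sum_mul, hν t, one_mul]
  rw [lhs_eq, rhs_eq]

end PolaAux

section PolaMain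

open Finset

/-- Per-round distribution on `Option (Fin K)`. -/
noncomputable def polaNu (K : ℕ) (t : ℕ) : Option (Fin K) → ℝ
  | some _ => polaDelta K t * (1 / (K : ℝ))
  | none => 1 - polaDelta K t

/-- The estimated reward as a function of the history. -/
noncomputable def polaEst (K T : ℕ) (x : ℕ → Fin K → ℝ)
    (c : Fin T → Option (Fin K)) (t : ℕ) (j : Fin K) : ℝ :=
  if h : t < T then
    (match c ⟨t, h⟩ with
     | some j' => if j' = j then x t j * (K : ℝ) / polaDelta K t else 0
     | none => 0)
  else 0

variable {K T : ℕ} {x : ℕ → Fin K → ℝ} {η : ℝ}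

lemma pola_logK_pos (hK : 2 ≤ K) : 0 < Real.log K :=
  Real.log_pos (by exact_mod_cast hK.trans_lt' one_lt_two)

lemma polaDelta_pos (hK : 2 ≤ K) (t : ℕ) : 0 < polaDelta K t := by
  have h1 : (0:ℝ) < (K : ℝ) * Real.log K := by
    have := pola_logK_pos hK
    have hK0 : (0:ℝ) < K := by positivity
    positivity
  have : (0:ℝ) < (K : ℝ) * Real.log K / ((t : ℝ) + 1) := by positivity
  exact lt_min one_pos (Real.rpow_pos_of_pos this _)

lemma polaDelta_le_one (t : ℕ) : polaDelta K t ≤ 1 := min_le_left _ _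

lemma polaNu_nonneg (hK : 2 ≤ K) (t : ℕ) (o : Option (Fin K)) : 0 ≤ polaNu K t o := by
  cases o with
  | some j =>
      have := polaDelta_pos (K := K) hK t
      have hK0 : (0:ℝ) < K := by positivity
      simp only [polaNu]
      positivity
  | none => simp [polaNu, polaDelta_le_one]

lemma polaNu_sum (hK : 2 ≤ K) (t : ℕ) : ∑ o : Option (Fin K), polaNu K t o = 1 := by
  rw [Fintype.sum_option]
  have hK0 : (K:ℝ) ≠ 0 := by positivity
  simp only [polaNu, Finset.sum_const, Finset.card_univ, Fintype.card_fin, nsmul_eq_mul]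
  field_simp
  ring

lemma polaHistProb_eq (c : Fin T → Option (Fin K)) :
    polaHistProb K T c = ∏ t : Fin T, polaNu K (t : ℕ) (c t) := by
  refine Finset.prod_congr rfl fun t _ => ?_
  cases h : c t <;> simp [polaNu, h]

lemma polaHistProb_nonneg (hK : 2 ≤ K) (c : Fin T → Option (Fin K)) :
    0 ≤ polaHistProb K T c := by
  rw [polaHistProb_eq]
  exact Finset.prod_nonneg fun t _ => polaNu_nonneg hK _ _

lemma polaWeight_succ (c : Fin T → Option (Fin K)) (t : ℕ) (j : Fin K) :
    polaWeight K T x η c (t + 1) j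
      = polaWeight K T x η c t j * Real.exp (η * polaEst K T x c t j) := rfl

lemma polaWeight_eq_exp (c : Fin T → Option (Fin K)) (t : ℕ) (j : Fin K) :
    polaWeight K T x η c t j = Real.exp (η * ∑ s ∈ Finset.range t, polaEst K T x c s j) := by
  induction t with
  | zero => simp [polaWeight]
  | succ t ih =>
      rw [polaWeight_succ, ih, Finset.sum_range_succ, mul_add, Real.exp_add]

lemma polaWeight_pos (c : Fin T → Option (Fin K)) (t : ℕ) (j : Fin K) :
    0 < polaWeight K T x η c t j := by
  rw [polaWeight_eq_exp]; exact Real.exp_pos _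

lemma polaWeightSum_pos (hK : 2 ≤ K) (c : Fin T → Option (Fin K)) (t : ℕ) :
    0 < ∑ j, polaWeight K T x η c t j :=
  Finset.sum_pos (fun j _ => polaWeight_pos c t j)
    ⟨⟨0, by omega⟩, Finset.mem_univ _⟩

lemma polaP_nonneg (hK : 2 ≤ K) (c : Fin T → Option (Fin K)) (t : ℕ) (i : Fin K) :
    0 ≤ polaP K T x η c t i :=
  div_nonneg (polaWeight_pos c t i).le (polaWeightSum_pos hK c t).le

lemma polaP_sum (hK : 2 ≤ K) (c : Fin T → Option (Fin K)) (t : ℕ) :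
    ∑ i, polaP K T x η c t i = 1 := by
  simp only [polaP, ← Finset.sum_div]
  exact div_self (polaWeightSum_pos hK c t).ne'

lemma polaEst_nonneg (hx : ∀ t < T, ∀ j, 0 ≤ x t j ∧ x t j ≤ 1) (hK : 2 ≤ K)
    (c : Fin T → Option (Fin K)) (t : ℕ) (j : Fin K) : 0 ≤ polaEst K T x c t j := by
  unfold polaEst
  split
  · rename_i h
    cases hc : c ⟨t, h⟩ with
    | some j' =>
        simp only
        split
        · have := (hx t h j).1
          have := polaDelta_pos (K := K) hK t
          positivity
        · exact le_rfl
    | none => exact le_rfl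
  · exact le_rfl

lemma polaEst_le (hx : ∀ t < T, ∀ j, 0 ≤ x t j ∧ x t j ≤ 1) (hK : 2 ≤ K)
    (c : Fin T → Option (Fin K)) (t : ℕ) (j : Fin K) :
    polaEst K T x c t j ≤ (K : ℝ) / polaDelta K t := by
  have hδ := polaDelta_pos (K := K) hK t
  have hK0 : (0:ℝ) < K := by exact_mod_cast (by omega : 0 < K)
  have hKd : 0 ≤ (K : ℝ) / polaDelta K t := by positivity
  unfold polaEst
  split
  · rename_i h
    cases hc : c ⟨t, h⟩ with
    | some j' =>
        simp only
        split
        · gcongr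
          nlinarith [(hx t h j).2, hK0]
        · exact hKd
    | none => simpa using hKd
  · exact hKd

lemma polaWeight_congr (c c' : Fin T → Option (Fin K)) (t : ℕ)
    (h : ∀ s : Fin T, (s : ℕ) < t → c s = c' s) (j : Fin K) :
    polaWeight K T x η c t j = polaWeight K T x η c' t j := by
  induction t with
  | zero => rfl
  | succ t ih =>
      rw [polaWeight_succ, polaWeight_succ,
        ih (fun s hs => h s (by omega))]
      congr 2
      unfold polaEst
      split
      · rename_i ht
        rw [h ⟨t, ht⟩ (by simp)]
      · rfl

end PolaMain

section PolaMain2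

open Finset

variable {K T : ℕ} {x : ℕ → Fin K → ℝ} {η : ℝ}

lemma polaP_congr (c c' : Fin T → Option (Fin K)) (t : ℕ)
    (h : ∀ s : Fin T, (s : ℕ) < t → c s = c' s) (i : Fin K) :
    polaP K T x η c t i = polaP K T x η c' t i := by
  unfold polaP
  rw [polaWeight_congr c c' t h]
  congr 1
  exact Finset.sum_congr rfl fun j _ => polaWeight_congr c c' t h j

lemma pola_pathwise (hK : 2 ≤ K) (hx : ∀ t < T, ∀ j, 0 ≤ x t j ∧ x t j ≤ 1)
    (hη0 : 0 < η) (hηK : ∀ t < T, η * ((K : ℝ) / polaDelta K t) ≤ 1)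
    (c : Fin T → Option (Fin K)) (j0 : Fin K) :
    ∑ t ∈ Finset.range T, polaEst K T x c t j0 ≤
      (∑ t ∈ Finset.range T, ∑ i, polaP K T x η c t i * polaEst K T x c t i)
        + (Real.exp 1 - 2) * η *
            (∑ t ∈ Finset.range T, ∑ i, polaP K T x η c t i * (polaEst K T x c t i) ^ 2)
        + Real.log K / η := by
  set W : ℕ → ℝ := fun t => ∑ j, polaWeight K T x η c t j with hW
  have hWpos : ∀ t, 0 < W t := fun t => polaWeightSum_pos hK c t
  have step : ∀ t < T,
      Real.log (W (t + 1)) - Real.log (W t) ≤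
        η * (∑ i, polaP K T x η c t i * polaEst K T x c t i)
          + (Real.exp 1 - 2) * η ^ 2 *
              (∑ i, polaP K T x η c t i * (polaEst K T x c t i) ^ 2) := by
    intro t ht
    have hfrac : W (t + 1)
        = W t * ∑ i, polaP K T x η c t i * Real.exp (η * polaEst K T x c t i) := by
      rw [Finset.mul_sum]
      refine Finset.sum_congr rfl fun i _ => ?_
      rw [polaWeight_succ, polaP]
      rw [show (∑ j : Fin K, polaWeight K T x η c t j) = W t from rfl]
      field_simp
      rw [mul_div_assoc, div_self (hWpos t).ne', mul_one]
    have hpos : 0 < ∑ i, polaP K T x η c t i * Real.exp (η * polaEst K T x c t i) := by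
      refine Finset.sum_pos' (fun i _ => mul_nonneg (polaP_nonneg hK c t i) (Real.exp_pos _).le) ?_
      refine ⟨⟨0, by omega⟩, Finset.mem_univ _, ?_⟩
      have h1 : 0 < polaP K T x η c t ⟨0, by omega⟩ :=
        div_pos (polaWeight_pos c t _) (hWpos t)
      exact mul_pos h1 (Real.exp_pos _)
    have hlog : Real.log (W (t + 1)) = Real.log (W t)
        + Real.log (∑ i, polaP K T x η c t i * Real.exp (η * polaEst K T x c t i)) := by
      rw [hfrac, Real.log_mul (hWpos t).ne' hpos.ne']
    have hsumle : (∑ i, polaP K T x η c t i * Real.exp (η * polaEst K T x c t i))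
        ≤ 1 + η * (∑ i, polaP K T x η c t i * polaEst K T x c t i)
          + (Real.exp 1 - 2) * η ^ 2 *
              (∑ i, polaP K T x η c t i * (polaEst K T x c t i) ^ 2) := by
      have hterm : ∀ i : Fin K,
          polaP K T x η c t i * Real.exp (η * polaEst K T x c t i)
            ≤ polaP K T x η c t i * (1 + η * polaEst K T x c t i
                + (Real.exp 1 - 2) * (η * polaEst K T x c t i) ^ 2) := by
        intro i
        refine mul_le_mul_of_nonneg_left ?_ (polaP_nonneg hK c t i)
        refine pola_exp_quad (mul_nonneg hη0.le (polaEst_nonneg hx hK c t i)) ?_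
        calc η * polaEst K T x c t i ≤ η * ((K : ℝ) / polaDelta K t) := by
              exact mul_le_mul_of_nonneg_left (polaEst_le hx hK c t i) hη0.le
          _ ≤ 1 := hηK t ht
      calc (∑ i, polaP K T x η c t i * Real.exp (η * polaEst K T x c t i))
          ≤ ∑ i, polaP K T x η c t i * (1 + η * polaEst K T x c t i
              + (Real.exp 1 - 2) * (η * polaEst K T x c t i) ^ 2) :=
            Finset.sum_le_sum fun i _ => hterm i
        _ = (∑ i, polaP K T x η c t i)
            + η * (∑ i, polaP K T x η c t i * polaEst K T x c t i)
            + (Real.exp 1 - 2) * η ^ 2 *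
                (∑ i, polaP K T x η c t i * (polaEst K T x c t i) ^ 2) := by
            rw [Finset.mul_sum, Finset.mul_sum, ← Finset.sum_add_distrib,
              ← Finset.sum_add_distrib]
            exact Finset.sum_congr rfl fun i _ => by ring
        _ = 1 + η * (∑ i, polaP K T x η c t i * polaEst K T x c t i)
            + (Real.exp 1 - 2) * η ^ 2 *
                (∑ i, polaP K T x η c t i * (polaEst K T x c t i) ^ 2) := by
            rw [polaP_sum hK]
    have hlog2 := Real.log_le_sub_one_of_pos hpos
    linarith [hlog2.trans (by linarith : (∑ i, polaP K T x η c t i *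
      Real.exp (η * polaEst K T x c t i)) - 1 ≤
        η * (∑ i, polaP K T x η c t i * polaEst K T x c t i)
          + (Real.exp 1 - 2) * η ^ 2 *
              (∑ i, polaP K T x η c t i * (polaEst K T x c t i) ^ 2)), hlog.ge, hlog.le]
  have telescope : ∑ t ∈ Finset.range T, (Real.log (W (t + 1)) - Real.log (W t))
      = Real.log (W T) - Real.log (W 0) :=
    Finset.sum_range_sub (fun t => Real.log (W t)) T
  have hsum_step : Real.log (W T) - Real.log (W 0) ≤
      η * (∑ t ∈ Finset.range T, ∑ i, polaP K T x η c t i * polaEst K T x c t i)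
        + (Real.exp 1 - 2) * η ^ 2 *
            (∑ t ∈ Finset.range T, ∑ i, polaP K T x η c t i * (polaEst K T x c t i) ^ 2) := by
    rw [← telescope, Finset.mul_sum, Finset.mul_sum, ← Finset.sum_add_distrib]
    exact Finset.sum_le_sum fun t ht => step t (Finset.mem_range.1 ht)
  have hW0 : Real.log (W 0) = Real.log K := by
    have : W 0 = (K : ℝ) := by simp [hW, polaWeight]
    rw [this]
  have hWT : η * ∑ t ∈ Finset.range T, polaEst K T x c t j0 ≤ Real.log (W T) := by
    have h1 : polaWeight K T x η c T j0 ≤ W T :=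
      Finset.single_le_sum (fun j _ => (polaWeight_pos c T j).le) (Finset.mem_univ j0)
    have h2 := Real.log_le_log (polaWeight_pos c T j0) h1
    rwa [polaWeight_eq_exp, Real.log_exp] at h2
  have main : η * ∑ t ∈ Finset.range T, polaEst K T x c t j0 ≤
      η * (∑ t ∈ Finset.range T, ∑ i, polaP K T x η c t i * polaEst K T x c t i)
        + (Real.exp 1 - 2) * η ^ 2 *
            (∑ t ∈ Finset.range T, ∑ i, polaP K T x η c t i * (polaEst K T x c t i) ^ 2)
        + Real.log K := by
    linarith [hsum_step, hWT, hW0.le, hW0.ge]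
  rw [← mul_le_mul_iff_right₀ hη0]
  calc η * (∑ t ∈ Finset.range T, polaEst K T x c t j0) ≤ _ := main
    _ = η * ((∑ t ∈ Finset.range T, ∑ i, polaP K T x η c t i * polaEst K T x c t i)
        + (Real.exp 1 - 2) * η *
            (∑ t ∈ Finset.range T, ∑ i, polaP K T x η c t i * (polaEst K T x c t i) ^ 2)
        + Real.log K / η) := by
      field_simp

end PolaMain2

section PolaMain3

open Finset

/-- Expectation over histories. -/
noncomputable def polaEx (K T : ℕ) (f : (Fin T → Option (Fin K)) → ℝ) : ℝ :=
  ∑ c : Fin T → Option (Fin K), polaHistProb K T c * f c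

/-- `polaEst` as a function of the round-`t` randomness only. -/
noncomputable def polaEstO (K : ℕ) (x : ℕ → Fin K → ℝ) (t : ℕ) (j : Fin K) :
    Option (Fin K) → ℝ
  | some j' => if j' = j then x t j * (K : ℝ) / polaDelta K t else 0
  | none => 0

variable {K T : ℕ} {x : ℕ → Fin K → ℝ} {η : ℝ}

lemma polaEx_const (hK : 2 ≤ K) (r : ℝ) : polaEx K T (fun _ => r) = r := by
  unfold polaEx
  rw [← Finset.sum_mul]
  have : ∑ c : Fin T → Option (Fin K), polaHistProb K T c = 1 := by
    simp only [polaHistProb_eq]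
    exact pola_mass_one _ (fun t => polaNu_sum hK t)
  rw [this, one_mul]

lemma polaEx_mono (hK : 2 ≤ K) {f g : (Fin T → Option (Fin K)) → ℝ}
    (h : ∀ c, f c ≤ g c) : polaEx K T f ≤ polaEx K T g :=
  Finset.sum_le_sum fun c _ => mul_le_mul_of_nonneg_left (h c) (polaHistProb_nonneg hK c)

lemma polaEx_finsum {ι : Type*} (s : Finset ι) (f : ι → (Fin T → Option (Fin K)) → ℝ) :
    polaEx K T (fun c => ∑ i ∈ s, f i c) = ∑ i ∈ s, polaEx K T (f i) := by
  unfold polaEx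
  rw [Finset.sum_comm]
  exact Finset.sum_congr rfl fun i _ => by rw [← Finset.mul_sum] -- wrong direction? check
  
lemma polaEx_smul (r : ℝ) (f : (Fin T → Option (Fin K)) → ℝ) :
    polaEx K T (fun c => r * f c) = r * polaEx K T f := by
  unfold polaEx
  rw [Finset.mul_sum]
  exact Finset.sum_congr rfl fun c _ => by ring

lemma polaEx_factor (hK : 2 ≤ K) (t : Fin T)
    (g : (Fin T → Option (Fin K)) → ℝ) (h : Option (Fin K) → ℝ)
    (hg : ∀ c c' : Fin T → Option (Fin K), (∀ s, s ≠ t → c s = c' s) → g c = g c') :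
    polaEx K T (fun c => g c * h (c t)) =
      (∑ o, polaNu K (t : ℕ) o * h o) * polaEx K T g := by
  unfold polaEx
  simp only [polaHistProb_eq]
  exact pola_factor_lemma (fun s : Fin T => polaNu K (s : ℕ))
    (fun s => polaNu_sum hK (s : ℕ)) t g h hg

lemma polaEst_eq (c : Fin T → Option (Fin K)) (t : Fin T) (j : Fin K) :
    polaEst K T x c (t : ℕ) j = polaEstO K x (t : ℕ) j (c t) := by
  unfold polaEst
  rw [dif_pos t.isLt]
  cases h : c ⟨(t : ℕ), t.isLt⟩ <;> simp [Fin.eta, polaEstO, h]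

lemma pola_sum_nu_estO (hK : 2 ≤ K) (t : ℕ) (j : Fin K) :
    ∑ o : Option (Fin K), polaNu K t o * polaEstO K x t j o = x t j := by
  rw [Fintype.sum_option]
  have hδ := polaDelta_pos (K := K) hK t
  have hK0 : (K : ℝ) ≠ 0 := by positivity
  simp only [polaNu, polaEstO, mul_zero, zero_add, mul_ite, mul_zero]
  rw [Finset.sum_ite_eq' Finset.univ j
    (fun _ => polaDelta K t * (1 / (K : ℝ)) * (x t j * (K : ℝ) / polaDelta K t))]
  simp only [Finset.mem_univ, if_true]
  field_simp

lemma polaEx_est (hK : 2 ≤ K) (t : Fin T) (j : Fin K) :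
    polaEx K T (fun c => polaEst K T x c (t : ℕ) j) = x (t : ℕ) j := by
  have : (fun c : Fin T → Option (Fin K) => polaEst K T x c (t : ℕ) j)
      = fun c => (1 : ℝ) * polaEstO K x (t : ℕ) j (c t) := by
    funext c
    rw [one_mul, polaEst_eq]
  rw [this, polaEx_factor hK t (fun _ => (1 : ℝ)) _ (fun _ _ _ => rfl),
    polaEx_const hK, pola_sum_nu_estO hK, mul_one]

lemma polaEx_p_est (hK : 2 ≤ K) (t : Fin T) (i : Fin K) :
    polaEx K T (fun c => polaP K T x η c (t : ℕ) i * polaEst K T x c (t : ℕ) i)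
      = x (t : ℕ) i * polaEx K T (fun c => polaP K T x η c (t : ℕ) i) := by
  have : (fun c : Fin T → Option (Fin K) =>
        polaP K T x η c (t : ℕ) i * polaEst K T x c (t : ℕ) i)
      = fun c => polaP K T x η c (t : ℕ) i * polaEstO K x (t : ℕ) i (c t) := by
    funext c
    rw [polaEst_eq]
  rw [this, polaEx_factor hK t _ _ (fun c c' hcc =>
    polaP_congr c c' (t : ℕ) (fun s hs => hcc s (by
      intro hst
      rw [hst] at hs
      exact lt_irrefl _ hs)) i), pola_sum_nu_estO hK]

lemma polaEx_p_nonneg (hK : 2 ≤ K) (t : ℕ) (i : Fin K) :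
    0 ≤ polaEx K T (fun c => polaP K T x η c t i) :=
  Finset.sum_nonneg fun c _ =>
    mul_nonneg (polaHistProb_nonneg hK c) (polaP_nonneg hK c t i)

lemma polaEx_p_sum (hK : 2 ≤ K) (t : ℕ) :
    ∑ i, polaEx K T (fun c => polaP K T x η c t i) = 1 := by
  rw [← polaEx_finsum Finset.univ (fun i c => polaP K T x η c t i)]
  have : (fun c : Fin T → Option (Fin K) => ∑ i, polaP K T x η c t i)
      = fun _ => (1 : ℝ) := funext fun c => polaP_sum hK c t
  rw [this, polaEx_const hK]

end PolaMain3

section PolaMain4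

open Finset

variable {K T : ℕ} {x : ℕ → Fin K → ℝ} {η : ℝ}

lemma polaEx_S1 (hK : 2 ≤ K) (t : Fin T) :
    polaEx K T (fun c => ∑ i, polaP K T x η c (t : ℕ) i * polaEst K T x c (t : ℕ) i)
      = ∑ i, x (t : ℕ) i * polaEx K T (fun c => polaP K T x η c (t : ℕ) i) := by
  rw [polaEx_finsum Finset.univ
    (fun i c => polaP K T x η c (t : ℕ) i * polaEst K T x c (t : ℕ) i)]
  exact Finset.sum_congr rfl fun i _ => polaEx_p_est hK t i

lemma polaEx_Q (hK : 2 ≤ K) (t : Fin T) :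
    polaEx K T (fun c => ∑ i, polaP K T x η c (t : ℕ) i * x (t : ℕ) i)
      = ∑ i, x (t : ℕ) i * polaEx K T (fun c => polaP K T x η c (t : ℕ) i) := by
  rw [polaEx_finsum Finset.univ (fun i c => polaP K T x η c (t : ℕ) i * x (t : ℕ) i)]
  refine Finset.sum_congr rfl fun i _ => ?_
  have : (fun c : Fin T → Option (Fin K) => polaP K T x η c (t : ℕ) i * x (t : ℕ) i)
      = fun c => x (t : ℕ) i * polaP K T x η c (t : ℕ) i := by
    funext c; ring
  rw [this, polaEx_smul]

lemma polaEx_Q_le_one (hK : 2 ≤ K) (hx : ∀ t < T, ∀ j, 0 ≤ x t j ∧ x t j ≤ 1) (t : Fin T) :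
    polaEx K T (fun c => ∑ i, polaP K T x η c (t : ℕ) i * x (t : ℕ) i) ≤ 1 := by
  have h1 : ∀ c : Fin T → Option (Fin K),
      ∑ i, polaP K T x η c (t : ℕ) i * x (t : ℕ) i ≤ 1 := by
    intro c
    calc ∑ i, polaP K T x η c (t : ℕ) i * x (t : ℕ) i
        ≤ ∑ i, polaP K T x η c (t : ℕ) i := by
          refine Finset.sum_le_sum fun i _ => ?_
          have := (hx (t : ℕ) t.isLt i).2
          have hp := polaP_nonneg (x := x) (η := η) hK c (t : ℕ) i
          nlinarith
      _ = 1 := polaP_sum hK c (t : ℕ)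
  calc polaEx K T (fun c => ∑ i, polaP K T x η c (t : ℕ) i * x (t : ℕ) i)
      ≤ polaEx K T (fun _ => (1 : ℝ)) := polaEx_mono hK h1
    _ = 1 := polaEx_const hK 1

lemma polaEx_S2 (hK : 2 ≤ K) (hx : ∀ t < T, ∀ j, 0 ≤ x t j ∧ x t j ≤ 1) (t : Fin T) :
    polaEx K T (fun c => ∑ i, polaP K T x η c (t : ℕ) i * (polaEst K T x c (t : ℕ) i) ^ 2)
      ≤ (K : ℝ) / polaDelta K (t : ℕ) := by
  have hδ := polaDelta_pos (K := K) hK (t : ℕ)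
  have hKd : 0 ≤ (K : ℝ) / polaDelta K (t : ℕ) := by positivity
  have path : ∀ c : Fin T → Option (Fin K),
      ∑ i, polaP K T x η c (t : ℕ) i * (polaEst K T x c (t : ℕ) i) ^ 2
        ≤ ((K : ℝ) / polaDelta K (t : ℕ)) *
            ∑ i, polaP K T x η c (t : ℕ) i * polaEst K T x c (t : ℕ) i := by
    intro c
    rw [Finset.mul_sum]
    refine Finset.sum_le_sum fun i _ => ?_
    have h1 := polaEst_nonneg hx hK c (t : ℕ) i
    have h2 := polaEst_le hx hK c (t : ℕ) i
    have hp := polaP_nonneg (x := x) (η := η) hK c (t : ℕ) i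
    nlinarith [mul_le_mul_of_nonneg_left h2 (mul_nonneg hp h1)]
  calc polaEx K T (fun c => ∑ i, polaP K T x η c (t : ℕ) i * (polaEst K T x c (t : ℕ) i) ^ 2)
      ≤ polaEx K T (fun c => ((K : ℝ) / polaDelta K (t : ℕ)) *
          ∑ i, polaP K T x η c (t : ℕ) i * polaEst K T x c (t : ℕ) i) := polaEx_mono hK path
    _ = ((K : ℝ) / polaDelta K (t : ℕ)) *
        ∑ i, x (t : ℕ) i * polaEx K T (fun c => polaP K T x η c (t : ℕ) i) := by
        rw [polaEx_smul, polaEx_S1 hK]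
    _ ≤ ((K : ℝ) / polaDelta K (t : ℕ)) * 1 := by
        refine mul_le_mul_of_nonneg_left ?_ hKd
        calc ∑ i, x (t : ℕ) i * polaEx K T (fun c => polaP K T x η c (t : ℕ) i)
            ≤ ∑ i, polaEx K T (fun c => polaP K T x η c (t : ℕ) i) := by
              refine Finset.sum_le_sum fun i _ => ?_
              exact mul_le_of_le_one_left (polaEx_p_nonneg (x := x) (η := η) hK (t : ℕ) i)
                (hx (t : ℕ) t.isLt i).2
          _ = 1 := polaEx_p_sum hK (t : ℕ)
    _ = (K : ℝ) / polaDelta K (t : ℕ) := mul_one _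

lemma polaGain_eq (hK : 2 ≤ K) :
    polaGain K T x η = ∑ t : Fin T, (1 - polaDelta K (t : ℕ)) *
      polaEx K T (fun c => ∑ i, polaP K T x η c (t : ℕ) i * x (t : ℕ) i) := by
  have hswap : polaGain K T x η = ∑ t : Fin T, polaEx K T (fun c =>
      (match c t with
       | none => ∑ i, polaP K T x η c (t : ℕ) i * x (t : ℕ) i
       | some _ => 0)) := by
    unfold polaGain polaEx
    rw [Finset.sum_comm]
    simp only [Finset.mul_sum]
  rw [hswap]
  refine Finset.sum_congr rfl fun t _ => ?_
  have hg' : ∀ c c' : Fin T → Option (Fin K), (∀ s, s ≠ t → c s = c' s) →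
      (∑ i, polaP K T x η c (t : ℕ) i * x (t : ℕ) i)
        = ∑ i, polaP K T x η c' (t : ℕ) i * x (t : ℕ) i := by
    intro c c' hcc
    refine Finset.sum_congr rfl fun i _ => ?_
    rw [polaP_congr c c' (t : ℕ) (fun s hs => hcc s (by
      intro hst
      rw [hst] at hs
      exact lt_irrefl _ hs)) i]
  have hfac := polaEx_factor hK t
    (fun c => ∑ i, polaP K T x η c (t : ℕ) i * x (t : ℕ) i)
    (fun o => match o with | none => (1 : ℝ) | some _ => 0) hg'
  have heq : polaEx K T (fun c =>
      (match c t with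
       | none => ∑ i, polaP K T x η c (t : ℕ) i * x (t : ℕ) i
       | some _ => 0))
      = polaEx K T (fun c => (∑ i, polaP K T x η c (t : ℕ) i * x (t : ℕ) i) *
          (fun o => match o with | none => (1 : ℝ) | some _ => 0) (c t)) := by
    congr 1
    funext c
    cases h : c t <;> simp [h]
  rw [heq, hfac]
  congr 1
  rw [Fintype.sum_option]
  simp [polaNu]

end PolaMain4

section PolaMain5

open Finset Real

/-- cube-root helper: `X = u^{1/3}` cubes back to `u`. -/
lemma pola_rpow_third_cube {u : ℝ} (hu : 0 ≤ u) : (u ^ ((1:ℝ)/3)) ^ (3:ℕ) = u := by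
  rw [← Real.rpow_natCast (u ^ ((1:ℝ)/3)) 3, ← Real.rpow_mul hu]
  norm_num

lemma pola_cube_up (t : ℕ) :
    ((t:ℝ)+1) ^ ((1:ℝ)/3) ≤
      (3/4) * ((((t:ℝ)+2) ^ ((4:ℝ)/3) - ((t:ℝ)+1) ^ ((4:ℝ)/3))) := by
  set u : ℝ := (t:ℝ) + 1 with hu
  have hu0 : (0:ℝ) < u := by positivity
  have hv0 : (0:ℝ) < u + 1 := by positivity
  set X : ℝ := u ^ ((1:ℝ)/3) with hX
  set Y : ℝ := (u+1) ^ ((1:ℝ)/3) with hY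
  have hX0 : 0 ≤ X := Real.rpow_nonneg hu0.le _
  have hY0 : 0 ≤ Y := Real.rpow_nonneg hv0.le _
  have hXY : X ≤ Y := Real.rpow_le_rpow hu0.le (by linarith) (by norm_num)
  have hX3 : X ^ (3:ℕ) = u := pola_rpow_third_cube hu0.le
  have hY3 : Y ^ (3:ℕ) = u + 1 := pola_rpow_third_cube hv0.le
  have h43u : u ^ ((4:ℝ)/3) = X ^ (4:ℕ) := by
    rw [hX, ← Real.rpow_natCast (u ^ ((1:ℝ)/3)) 4, ← Real.rpow_mul hu0.le]
    norm_num
  have h43v : (u+1) ^ ((4:ℝ)/3) = Y ^ (4:ℕ) := by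
    rw [hY, ← Real.rpow_natCast ((u+1) ^ ((1:ℝ)/3)) 4, ← Real.rpow_mul hv0.le]
    norm_num
  have hbase : (t:ℝ) + 2 = u + 1 := by rw [hu]; ring
  rw [hbase, h43u, h43v]
  have hsos : 0 ≤ (X - Y)^2 * (X^2 + 2*X*Y + 3*Y^2) := by positivity
  nlinarith [hsos, hX3, hY3]

lemma pola_cube_down (t : ℕ) :
    (((t:ℝ)+1) ^ ((1:ℝ)/3))⁻¹ ≤
      (3/2) * ((((t:ℝ)+1) ^ ((2:ℝ)/3) - (t:ℝ) ^ ((2:ℝ)/3))) := by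
  have hu0 : (0:ℝ) < (t:ℝ) + 1 := by positivity
  have hb0 : (0:ℝ) ≤ (t:ℝ) := by positivity
  set X : ℝ := ((t:ℝ)+1) ^ ((1:ℝ)/3) with hX
  set B : ℝ := (t:ℝ) ^ ((1:ℝ)/3) with hB
  have hX0 : 0 < X := Real.rpow_pos_of_pos hu0 _
  have hB0 : 0 ≤ B := Real.rpow_nonneg hb0 _
  have hBX : B ≤ X := Real.rpow_le_rpow hb0 (by linarith) (by norm_num)
  have hX3 : X ^ (3:ℕ) = (t:ℝ) + 1 := pola_rpow_third_cube hu0.le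
  have hB3 : B ^ (3:ℕ) = (t:ℝ) := pola_rpow_third_cube hb0
  have h23u : ((t:ℝ)+1) ^ ((2:ℝ)/3) = X ^ (2:ℕ) := by
    rw [hX, ← Real.rpow_natCast (((t:ℝ)+1) ^ ((1:ℝ)/3)) 2, ← Real.rpow_mul hu0.le]
    norm_num
  have h23b : (t:ℝ) ^ ((2:ℝ)/3) = B ^ (2:ℕ) := by
    rw [hB, ← Real.rpow_natCast ((t:ℝ) ^ ((1:ℝ)/3)) 2, ← Real.rpow_mul hb0]
    norm_num
  rw [h23u, h23b, inv_le_iff_one_le_mul₀' hX0]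
  have hsos : 0 ≤ (X - B)^2 * (X + 2*B) := by positivity
  nlinarith [hsos, hX3, hB3]

end PolaMain5

section PolaMain6

open Finset

variable {K T : ℕ}

lemma polaDelta_inv (hK : 2 ≤ K) (t : ℕ) :
    (K:ℝ) / polaDelta K t
      = (K:ℝ) * max 1 ((((t:ℝ)+1) / ((K:ℝ) * Real.log K)) ^ ((1:ℝ)/3)) := by
  have ha0 : (0:ℝ) < (K:ℝ) * Real.log K := by
    have := pola_logK_pos hK
    have : (0:ℝ) < K := by positivity
    have := pola_logK_pos hK
    positivity
  have hu0 : (0:ℝ) < (t:ℝ) + 1 := by positivity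
  have hz0 : (0:ℝ) < (((K:ℝ) * Real.log K) / ((t:ℝ)+1)) ^ ((1:ℝ)/3) :=
    Real.rpow_pos_of_pos (by positivity) _
  have hzinv : ((((K:ℝ) * Real.log K) / ((t:ℝ)+1)) ^ ((1:ℝ)/3))⁻¹
      = (((t:ℝ)+1) / ((K:ℝ) * Real.log K)) ^ ((1:ℝ)/3) := by
    rw [← Real.inv_rpow (by positivity), inv_div]
  have hδ : polaDelta K t = min 1 ((((K:ℝ) * Real.log K) / ((t:ℝ)+1)) ^ ((1:ℝ)/3)) := rfl
  rw [div_eq_mul_inv]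
  congr 1
  rw [hδ]
  rcases le_total ((((K:ℝ) * Real.log K) / ((t:ℝ)+1)) ^ ((1:ℝ)/3)) 1 with h | h
  · rw [min_eq_right h, hzinv]
    exact (max_eq_right (by
      rw [← hzinv]
      exact one_le_inv_iff₀.2 ⟨hz0, h⟩)).symm
  · rw [min_eq_left h, inv_one]
    exact (max_eq_left (by
      rw [← hzinv]
      exact inv_le_one_iff₀.2 (Or.inr h))).symm

lemma pola_etaK (hK : 2 ≤ K) (hT : (K : ℝ) * Real.log K ≤ (T : ℝ))
    {η : ℝ} (hη0 : 0 < η)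
    (hη : η ≤ (Real.log K / ((K : ℝ) ^ 2 * (T : ℝ))) ^ ((1 : ℝ) / 3)) :
    ∀ t < T, η * ((K : ℝ) / polaDelta K t) ≤ 1 := by
  intro t ht
  have hlog := pola_logK_pos hK
  have hK0 : (0:ℝ) < K := by positivity
  have ha0 : (0:ℝ) < (K:ℝ) * Real.log K := by positivity
  have hT0 : (0:ℝ) < T := lt_of_lt_of_le ha0 hT
  have hu0 : (0:ℝ) < (t:ℝ) + 1 := by positivity
  have huT : (t:ℝ) + 1 ≤ (T:ℝ) := by exact_mod_cast Nat.succ_le_of_lt ht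
  -- η·K ≤ (a/T)^{1/3}
  have hKcube : ((K:ℝ) ^ (3:ℕ)) ^ ((1:ℝ)/3) = (K:ℝ) := by
    rw [← Real.rpow_natCast (K:ℝ) 3, ← Real.rpow_mul hK0.le]
    norm_num
  have hηK : η * (K:ℝ) ≤ (((K:ℝ) * Real.log K) / (T:ℝ)) ^ ((1:ℝ)/3) := by
    have h1 : η * (K:ℝ) ≤ (Real.log K / ((K : ℝ) ^ 2 * (T : ℝ))) ^ ((1 : ℝ) / 3) * (K:ℝ) :=
      mul_le_mul_of_nonneg_right hη hK0.le
    have h2 : (Real.log K / ((K : ℝ) ^ 2 * (T : ℝ))) ^ ((1 : ℝ) / 3) * (K:ℝ)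
        = (((K:ℝ) * Real.log K) / (T:ℝ)) ^ ((1:ℝ)/3) := by
      have hsplit : (K:ℝ) * Real.log K / (T:ℝ)
          = (Real.log K / ((K:ℝ) ^ 2 * (T:ℝ))) * (K:ℝ) ^ (3:ℕ) := by
        field_simp
      rw [hsplit, Real.mul_rpow (div_nonneg hlog.le (by positivity)) (by positivity), hKcube]
    rw [h2] at h1
    exact h1
  rw [polaDelta_inv hK t, ← mul_assoc]
  rcases max_cases (1:ℝ) ((((t:ℝ)+1) / ((K:ℝ) * Real.log K)) ^ ((1:ℝ)/3)) with
    ⟨hmax, _⟩ | ⟨hmax, _⟩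
  · rw [hmax, mul_one]
    calc η * (K:ℝ) ≤ (((K:ℝ) * Real.log K) / (T:ℝ)) ^ ((1:ℝ)/3) := hηK
      _ ≤ 1 := Real.rpow_le_one (by positivity) (by
          rw [div_le_one hT0]
          exact hT) (by norm_num)
  · rw [hmax]
    calc η * (K:ℝ) * ((((t:ℝ)+1) / ((K:ℝ) * Real.log K)) ^ ((1:ℝ)/3))
        ≤ ((((K:ℝ) * Real.log K) / (T:ℝ)) ^ ((1:ℝ)/3)) *
            ((((t:ℝ)+1) / ((K:ℝ) * Real.log K)) ^ ((1:ℝ)/3)) := by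
          exact mul_le_mul_of_nonneg_right hηK (Real.rpow_nonneg (by positivity) _)
      _ = ((((K:ℝ) * Real.log K) / (T:ℝ)) * (((t:ℝ)+1) / ((K:ℝ) * Real.log K))) ^ ((1:ℝ)/3) := by
          rw [← Real.mul_rpow (by positivity) (by positivity)]
      _ = (((t:ℝ)+1) / (T:ℝ)) ^ ((1:ℝ)/3) := by
          congr 1
          field_simp
      _ ≤ 1 := Real.rpow_le_one (by positivity) (by rw [div_le_one hT0]; exact huT)
          (by norm_num)

end PolaMain6

section PolaMain7

open Finset

lemma pola_tel (f : ℕ → ℝ) : ∀ {n T : ℕ}, n ≤ T →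
    ∑ t ∈ Finset.Ico n T, (f (t + 1) - f t) = f T - f n := by
  intro n T h
  induction T with
  | zero =>
      have : n = 0 := by omega
      subst this
      simp
  | succ T ih =>
      by_cases hn : n ≤ T
      · rw [Finset.sum_Ico_succ_top hn, ih hn]
        ring
      · have : n = T + 1 := by omega
        subst this
        simp

variable {K T : ℕ}

lemma pola_sum_delta (hK : 2 ≤ K) :
    ∑ t ∈ Finset.range T, polaDelta K t
      ≤ (3 / 2) * (((K : ℝ) * (T : ℝ) ^ 2 * Real.log K) ^ ((1 : ℝ) / 3)) := by
  have hlog := pola_logK_pos hK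
  have hK0 : (0:ℝ) < K := by positivity
  have ha0 : (0:ℝ) < (K:ℝ) * Real.log K := by positivity
  set a := (K:ℝ) * Real.log K with hadef
  have ha3 : (0:ℝ) ≤ a ^ ((1:ℝ)/3) := Real.rpow_nonneg ha0.le _
  have hterm : ∀ t : ℕ, polaDelta K t ≤
      a ^ ((1:ℝ)/3) * ((3/2) * ((((t:ℝ)+1) ^ ((2:ℝ)/3)) - ((t:ℝ) ^ ((2:ℝ)/3)))) := by
    intro t
    have hu0 : (0:ℝ) < (t:ℝ) + 1 := by positivity
    calc polaDelta K t ≤ (a / ((t:ℝ)+1)) ^ ((1:ℝ)/3) := min_le_right _ _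
      _ = a ^ ((1:ℝ)/3) * ((((t:ℝ)+1) ^ ((1:ℝ)/3))⁻¹) := by
          rw [Real.div_rpow ha0.le hu0.le, div_eq_mul_inv]
      _ ≤ a ^ ((1:ℝ)/3) * ((3/2) * ((((t:ℝ)+1) ^ ((2:ℝ)/3)) - ((t:ℝ) ^ ((2:ℝ)/3)))) :=
          mul_le_mul_of_nonneg_left (pola_cube_down t) ha3
  calc ∑ t ∈ Finset.range T, polaDelta K t
      ≤ ∑ t ∈ Finset.range T,
          a ^ ((1:ℝ)/3) * ((3/2) * ((((t:ℝ)+1) ^ ((2:ℝ)/3)) - ((t:ℝ) ^ ((2:ℝ)/3)))) :=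
        Finset.sum_le_sum fun t _ => hterm t
    _ = a ^ ((1:ℝ)/3) * (3/2) *
        ∑ t ∈ Finset.range T, ((((t:ℝ)+1) ^ ((2:ℝ)/3)) - ((t:ℝ) ^ ((2:ℝ)/3))) := by
        rw [Finset.mul_sum]
        exact Finset.sum_congr rfl fun t _ => by ring
    _ = a ^ ((1:ℝ)/3) * (3/2) * ((T:ℝ) ^ ((2:ℝ)/3)) := by
        congr 1
        have := pola_tel (fun n : ℕ => ((n:ℝ)) ^ ((2:ℝ)/3)) (Nat.zero_le T)
        rw [← Nat.Ico_zero_eq_range]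
        rw [show (∑ t ∈ Finset.Ico 0 T, ((((t:ℝ)+1) ^ ((2:ℝ)/3)) - ((t:ℝ) ^ ((2:ℝ)/3))))
          = ∑ t ∈ Finset.Ico 0 T, (((((t+1):ℕ):ℝ) ^ ((2:ℝ)/3)) - (((t:ℕ):ℝ) ^ ((2:ℝ)/3)))
          from Finset.sum_congr rfl fun t _ => by push_cast; ring_nf, this]
        norm_num
    _ = (3/2) * (((K : ℝ) * (T : ℝ) ^ 2 * Real.log K) ^ ((1 : ℝ) / 3)) := by
        have h1 : (K : ℝ) * (T : ℝ) ^ 2 * Real.log K = a * (T:ℝ) ^ (2:ℕ) := by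
          rw [hadef]; ring
        rw [h1, Real.mul_rpow ha0.le (by positivity)]
        have h2 : ((T:ℝ) ^ (2:ℕ)) ^ ((1:ℝ)/3) = (T:ℝ) ^ ((2:ℝ)/3) := by
          rw [← Real.rpow_natCast (T:ℝ) 2, ← Real.rpow_mul (by positivity)]
          norm_num
        rw [h2]
        ring

lemma pola_sum_Kdelta (hK : 2 ≤ K) (hT : (K : ℝ) * Real.log K ≤ (T : ℝ)) :
    ∑ t ∈ Finset.range T, (K : ℝ) / polaDelta K t
      ≤ (K : ℝ) * ((3 / 4) * ((((T : ℝ) + 1) ^ 4 / ((K : ℝ) * Real.log K)) ^ ((1 : ℝ) / 3))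
          + (K : ℝ) * Real.log K / 4) := by
  have hlog := pola_logK_pos hK
  have hK0 : (0:ℝ) < K := by positivity
  have ha0 : (0:ℝ) < (K:ℝ) * Real.log K := by positivity
  set a := (K:ℝ) * Real.log K with hadef
  set n := ⌊a⌋₊ with hndef
  have hna : (n:ℝ) ≤ a := Nat.floor_le ha0.le
  have han : a < (n:ℝ) + 1 := by
    have := Nat.lt_floor_add_one a
    exact_mod_cast this
  have hnT : n ≤ T := by
    have : (n:ℝ) ≤ (T:ℝ) := le_trans hna hT
    exact_mod_cast this
  have ha3 : (0:ℝ) < a ^ ((1:ℝ)/3) := Real.rpow_pos_of_pos ha0 _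
  -- split the sum
  rw [← Nat.Ico_zero_eq_range,
    ← Finset.sum_Ico_consecutive (fun t => (K : ℝ) / polaDelta K t) (Nat.zero_le n) hnT]
  have part1 : ∑ t ∈ Finset.Ico 0 n, (K : ℝ) / polaDelta K t = (n:ℝ) * (K:ℝ) := by
    rw [Finset.sum_congr rfl (fun t ht => ?_), Finset.sum_const, Nat.card_Ico,
      Nat.sub_zero, nsmul_eq_mul]
    rw [polaDelta_inv hK t]
    have htn : (t:ℝ) + 1 ≤ a := by
      have h1 : t + 1 ≤ n := (Finset.mem_Ico.1 ht).2
      have : ((t:ℝ) + 1) ≤ (n:ℝ) := by exact_mod_cast h1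
      linarith
    rw [max_eq_left (Real.rpow_le_one (by positivity)
      ((div_le_one ha0).2 htn) (by norm_num)), mul_one]
  have part2 : ∑ t ∈ Finset.Ico n T, (K : ℝ) / polaDelta K t
      ≤ (K:ℝ) * (3/4) / a ^ ((1:ℝ)/3) * (((T:ℝ)+1) ^ ((4:ℝ)/3) - ((n:ℝ)+1) ^ ((4:ℝ)/3)) := by
    have hterm : ∀ t ∈ Finset.Ico n T, (K : ℝ) / polaDelta K t
        ≤ (K:ℝ) * (3/4) / a ^ ((1:ℝ)/3) *
            ((((t:ℝ)+2) ^ ((4:ℝ)/3)) - (((t:ℝ)+1) ^ ((4:ℝ)/3))) := by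
      intro t ht
      have hnt : n ≤ t := (Finset.mem_Ico.1 ht).1
      have hat : a ≤ (t:ℝ) + 1 := by
        have : (n:ℝ) ≤ (t:ℝ) := by exact_mod_cast hnt
        linarith
      have hu0 : (0:ℝ) < (t:ℝ) + 1 := by positivity
      rw [polaDelta_inv hK t, max_eq_right (Real.one_le_rpow
        ((le_div_iff₀ ha0).2 (by linarith)) (by norm_num))]
      rw [Real.div_rpow hu0.le ha0.le]
      calc (K:ℝ) * ((((t:ℝ)+1) ^ ((1:ℝ)/3)) / (a ^ ((1:ℝ)/3)))
          ≤ (K:ℝ) * (((3/4) * ((((t:ℝ)+2) ^ ((4:ℝ)/3)) - (((t:ℝ)+1) ^ ((4:ℝ)/3))))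
              / (a ^ ((1:ℝ)/3))) := by
            refine mul_le_mul_of_nonneg_left ?_ hK0.le
            exact div_le_div_of_nonneg_right (pola_cube_up t) ha3.le
        _ = (K:ℝ) * (3/4) / a ^ ((1:ℝ)/3) *
            ((((t:ℝ)+2) ^ ((4:ℝ)/3)) - (((t:ℝ)+1) ^ ((4:ℝ)/3))) := by ring
    calc ∑ t ∈ Finset.Ico n T, (K : ℝ) / polaDelta K t
        ≤ ∑ t ∈ Finset.Ico n T, (K:ℝ) * (3/4) / a ^ ((1:ℝ)/3) *
            ((((t:ℝ)+2) ^ ((4:ℝ)/3)) - (((t:ℝ)+1) ^ ((4:ℝ)/3))) :=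
          Finset.sum_le_sum hterm
      _ = (K:ℝ) * (3/4) / a ^ ((1:ℝ)/3) * ∑ t ∈ Finset.Ico n T,
            ((((t:ℝ)+2) ^ ((4:ℝ)/3)) - (((t:ℝ)+1) ^ ((4:ℝ)/3))) := by
          rw [Finset.mul_sum]
      _ = (K:ℝ) * (3/4) / a ^ ((1:ℝ)/3) * (((T:ℝ)+1) ^ ((4:ℝ)/3) - ((n:ℝ)+1) ^ ((4:ℝ)/3)) := by
          congr 1
          have := pola_tel (fun m : ℕ => (((m:ℝ)+1)) ^ ((4:ℝ)/3)) hnT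
          rw [show (∑ t ∈ Finset.Ico n T, ((((t:ℝ)+2) ^ ((4:ℝ)/3)) - (((t:ℝ)+1) ^ ((4:ℝ)/3))))
            = ∑ t ∈ Finset.Ico n T, ((((((t+1):ℕ):ℝ)+1) ^ ((4:ℝ)/3))
                - ((((t:ℕ):ℝ)+1) ^ ((4:ℝ)/3)))
            from Finset.sum_congr rfl fun t _ => by push_cast; ring_nf, this]
  -- combine
  have hT1 : (0:ℝ) ≤ ((T:ℝ)+1) ^ ((4:ℝ)/3) := Real.rpow_nonneg (by positivity) _
  have hform : ((((T : ℝ) + 1) ^ 4 / a) ^ ((1 : ℝ) / 3))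
      = ((T:ℝ)+1) ^ ((4:ℝ)/3) / a ^ ((1:ℝ)/3) := by
    rw [Real.div_rpow (by positivity) ha0.le]
    congr 1
    rw [← Real.rpow_natCast ((T:ℝ)+1) 4, ← Real.rpow_mul (by positivity)]
    norm_num
  rw [part1]
  have ha43 : a ≤ ((n:ℝ)+1) ^ ((4:ℝ)/3) / a ^ ((1:ℝ)/3) := by
    have h1 : a ^ ((4:ℝ)/3) ≤ ((n:ℝ)+1) ^ ((4:ℝ)/3) :=
      Real.rpow_le_rpow ha0.le han.le (by norm_num)
    have h2 : a ^ ((4:ℝ)/3) = a * a ^ ((1:ℝ)/3) := by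
      rw [show (4:ℝ)/3 = 1 + 1/3 by norm_num, Real.rpow_add ha0, Real.rpow_one]
    rw [le_div_iff₀ ha3, ← h2]
    exact h1
  calc (n:ℝ) * (K:ℝ) + ∑ t ∈ Finset.Ico n T, (K : ℝ) / polaDelta K t
      ≤ (n:ℝ) * (K:ℝ) + (K:ℝ) * (3/4) / a ^ ((1:ℝ)/3) *
          (((T:ℝ)+1) ^ ((4:ℝ)/3) - ((n:ℝ)+1) ^ ((4:ℝ)/3)) :=
        add_le_add le_rfl part2
    _ ≤ (K : ℝ) * ((3/4) * ((((T : ℝ) + 1) ^ 4 / a) ^ ((1 : ℝ) / 3)) + a / 4) := by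
        rw [hform]
        have hdistrib : (K:ℝ) * (3/4) / a ^ ((1:ℝ)/3) *
            (((T:ℝ)+1) ^ ((4:ℝ)/3) - ((n:ℝ)+1) ^ ((4:ℝ)/3))
            = (K:ℝ) * ((3/4) * (((T:ℝ)+1) ^ ((4:ℝ)/3) / a ^ ((1:ℝ)/3)))
              - (K:ℝ) * ((3/4) * (((n:ℝ)+1) ^ ((4:ℝ)/3) / a ^ ((1:ℝ)/3))) := by
          field_simp
        rw [hdistrib]
        have h3 : (K:ℝ) * ((3/4) * (((n:ℝ)+1) ^ ((4:ℝ)/3) / a ^ ((1:ℝ)/3)))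
            ≥ (K:ℝ) * ((3/4) * a) := by
          refine mul_le_mul_of_nonneg_left ?_ hK0.le
          nlinarith [ha43]
        nlinarith [hna, hK0]
  
end PolaMain7

section PolaMain8

open Finset

variable {K T : ℕ} {x : ℕ → Fin K → ℝ} {η : ℝ}

lemma polaEx_add (f g : (Fin T → Option (Fin K)) → ℝ) :
    polaEx K T (fun c => f c + g c) = polaEx K T f + polaEx K T g := by
  unfold polaEx
  rw [← Finset.sum_add_distrib]
  exact Finset.sum_congr rfl fun c _ => by ring

theorem pola_regret_upper_bound' (K T : ℕ) (hK : 2 ≤ K)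
    (hT : (K : ℝ) * Real.log K ≤ (T : ℝ))
    (x : ℕ → Fin K → ℝ) (hx : ∀ t < T, ∀ j, 0 ≤ x t j ∧ x t j ≤ 1)
    (η : ℝ) (hη0 : 0 < η)
    (hη : η ≤ (Real.log K / ((K : ℝ) ^ 2 * (T : ℝ))) ^ ((1 : ℝ) / 3)) :
    (Finset.univ.sup' (⟨⟨0, Nat.zero_lt_of_lt hK⟩, Finset.mem_univ _⟩ :
          (Finset.univ : Finset (Fin K)).Nonempty)
        fun j : Fin K => ∑ t ∈ Finset.range T, x t j) -
        polaGain K T x η ≤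
      (Real.exp 1 - 2) * η * (K : ℝ) *
          ((3 / 4) * ((((T : ℝ) + 1) ^ 4 / ((K : ℝ) * Real.log K)) ^ ((1 : ℝ) / 3)) +
            (K : ℝ) * Real.log K / 4) +
        Real.log K / η +
        (3 / 2) * (((K : ℝ) * (T : ℝ) ^ 2 * Real.log K) ^ ((1 : ℝ) / 3)) := by
  have he2 : (0:ℝ) ≤ Real.exp 1 - 2 := by
    nlinarith [Real.exp_one_gt_d9]
  have hηK := pola_etaK hK hT hη0 hη
  obtain ⟨j0, _, hj0⟩ := Finset.exists_mem_eq_sup'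
    (⟨⟨0, by omega⟩, Finset.mem_univ _⟩ : (Finset.univ : Finset (Fin K)).Nonempty)
    (fun j : Fin K => ∑ t ∈ Finset.range T, x t j)
  rw [hj0]
  -- expectation of the optimal estimated gain
  have hGmax : ∑ t ∈ Finset.range T, x t j0
      = polaEx K T (fun c => ∑ t ∈ Finset.range T, polaEst K T x c t j0) := by
    rw [polaEx_finsum (Finset.range T) (fun t c => polaEst K T x c t j0)]
    refine Finset.sum_congr rfl fun t ht => ?_
    exact (polaEx_est hK ⟨t, Finset.mem_range.1 ht⟩ j0).symm
  -- expectation of the pathwise inequality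
  have hmono : polaEx K T (fun c => ∑ t ∈ Finset.range T, polaEst K T x c t j0)
      ≤ polaEx K T (fun c =>
          ((∑ t ∈ Finset.range T, ∑ i, polaP K T x η c t i * polaEst K T x c t i)
            + (Real.exp 1 - 2) * η *
                (∑ t ∈ Finset.range T, ∑ i, polaP K T x η c t i * (polaEst K T x c t i) ^ 2))
          + Real.log K / η) := by
    refine polaEx_mono hK fun c => ?_
    have := pola_pathwise hK hx hη0 hηK c j0
    linarith
  have hsplit : polaEx K T (fun c =>
      ((∑ t ∈ Finset.range T, ∑ i, polaP K T x η c t i * polaEst K T x c t i)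
        + (Real.exp 1 - 2) * η *
            (∑ t ∈ Finset.range T, ∑ i, polaP K T x η c t i * (polaEst K T x c t i) ^ 2))
      + Real.log K / η)
      = polaEx K T (fun c =>
            ∑ t ∈ Finset.range T, ∑ i, polaP K T x η c t i * polaEst K T x c t i)
        + (Real.exp 1 - 2) * η * polaEx K T (fun c =>
            ∑ t ∈ Finset.range T, ∑ i, polaP K T x η c t i * (polaEst K T x c t i) ^ 2)
        + Real.log K / η := by
    rw [polaEx_add, polaEx_add, polaEx_smul, polaEx_const hK]
  -- the S1 term equals the expected instantaneous gain
  have hS1 : polaEx K T (fun c =>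
        ∑ t ∈ Finset.range T, ∑ i, polaP K T x η c t i * polaEst K T x c t i)
      = ∑ t ∈ Finset.range T,
          polaEx K T (fun c => ∑ i, polaP K T x η c t i * x t i) := by
    rw [polaEx_finsum (Finset.range T)
      (fun t c => ∑ i, polaP K T x η c t i * polaEst K T x c t i)]
    refine Finset.sum_congr rfl fun t ht => ?_
    have h1 := polaEx_S1 (x := x) (η := η) hK ⟨t, Finset.mem_range.1 ht⟩
    have h2 := polaEx_Q (x := x) (η := η) hK ⟨t, Finset.mem_range.1 ht⟩
    exact h1.trans h2.symm
  -- the S2 term is bounded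
  have hS2 : polaEx K T (fun c =>
        ∑ t ∈ Finset.range T, ∑ i, polaP K T x η c t i * (polaEst K T x c t i) ^ 2)
      ≤ ∑ t ∈ Finset.range T, (K : ℝ) / polaDelta K t := by
    rw [polaEx_finsum (Finset.range T)
      (fun t c => ∑ i, polaP K T x η c t i * (polaEst K T x c t i) ^ 2)]
    exact Finset.sum_le_sum fun t ht =>
      polaEx_S2 hK hx ⟨t, Finset.mem_range.1 ht⟩
  -- the gain
  have hgain : polaGain K T x η = ∑ t ∈ Finset.range T, (1 - polaDelta K t) *
      polaEx K T (fun c => ∑ i, polaP K T x η c t i * x t i) := by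
    rw [polaGain_eq hK]
    exact Fin.sum_univ_eq_sum_range (fun t => (1 - polaDelta K t) *
      polaEx K T (fun c => ∑ i, polaP K T x η c t i * x t i)) T
  have hgain_ge : ∑ t ∈ Finset.range T,
        polaEx K T (fun c => ∑ i, polaP K T x η c t i * x t i) - polaGain K T x η
      ≤ ∑ t ∈ Finset.range T, polaDelta K t := by
    rw [hgain, ← Finset.sum_sub_distrib]
    refine Finset.sum_le_sum fun t ht => ?_
    have hQ1 := polaEx_Q_le_one (η := η) hK hx ⟨t, Finset.mem_range.1 ht⟩
    have hδ0 := (polaDelta_pos (K := K) hK t).le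
    have hδ1 := polaDelta_le_one (K := K) t
    nlinarith
  -- numeric sum bounds
  have hSK := pola_sum_Kdelta hK hT
  have hSD := pola_sum_delta (T := T) hK
  -- put everything together
  have hmul : (Real.exp 1 - 2) * η * polaEx K T (fun c =>
        ∑ t ∈ Finset.range T, ∑ i, polaP K T x η c t i * (polaEst K T x c t i) ^ 2)
      ≤ (Real.exp 1 - 2) * η *
          ((K : ℝ) * ((3 / 4) * ((((T : ℝ) + 1) ^ 4 / ((K : ℝ) * Real.log K)) ^ ((1 : ℝ) / 3))
            + (K : ℝ) * Real.log K / 4)) :=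
    mul_le_mul_of_nonneg_left (hS2.trans hSK) (by positivity)
  have hfinal := hGmax ▸ (hmono.trans_eq hsplit)
  rw [hS1] at hfinal
  nlinarith [hfinal, hgain_ge, hSD, hmul, he2, hη0]

end PolaMain8

/-- for any `K ≥ 2`, any horizon `T ≥ K·ln K`, any rewards
`x t j ∈ [0,1]` and any `0 < η ≤ (ln K/(K²·T))^{1/3}`, the expected regret of
POLA satisfies
`G_max − E[G_POLA] ≤ (e−2)·η·K·((3/4)·((T+1)⁴/(K·ln K))^{1/3} + K·ln K/4)
  + (ln K)/η + (3/2)·(K·T²·ln K)^{1/3}`,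
where `G_max = max_j ∑_t x t j`. -/
theorem pola_regret_upper_bound (K T : ℕ) (hK : 2 ≤ K)
    (hT : (K : ℝ) * Real.log K ≤ (T : ℝ))
    (x : ℕ → Fin K → ℝ) (hx : ∀ t < T, ∀ j, 0 ≤ x t j ∧ x t j ≤ 1)
    (η : ℝ) (hη0 : 0 < η)
    (hη : η ≤ (Real.log K / ((K : ℝ) ^ 2 * (T : ℝ))) ^ ((1 : ℝ) / 3)) :
    (Finset.univ.sup' (⟨⟨0, by omega⟩, Finset.mem_univ _⟩ :
          (Finset.univ : Finset (Fin K)).Nonempty)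
        fun j : Fin K => ∑ t ∈ Finset.range T, x t j) -
        polaGain K T x η ≤
      (Real.exp 1 - 2) * η * (K : ℝ) *
          ((3 / 4) * ((((T : ℝ) + 1) ^ 4 / ((K : ℝ) * Real.log K)) ^ ((1 : ℝ) / 3)) +
            (K : ℝ) * Real.log K / 4) +
        Real.log K / η +
        (3 / 2) * (((K : ℝ) * (T : ℝ) ^ 2 * Real.log K) ^ ((1 : ℝ) / 3)) := by
  exact pola_regret_upper_bound' K T hK hT x hx η hη0 hη
end

section
/- Fix K ≥ 2, T ≥ 1, an action i ∈ {1,…,K}, ε ∈ (0,1/2), and a (possibly randomized) observation strategy which at each round t selects an action to observe as a function of the previously observed reward values r_1,…,r_{t−1} ∈ {0,1}. Under the law P_i, the reward observed at a round where action i is selected is Bernoulli(1/2+ε) and the reward observed at a round where any other action is selected is Bernoulli(1/2), independently across rounds; under the law P_unif every observed reward is Bernoulli(1/2), independently across rounds. Let N_i be the number of rounds t ∈ {1,…,T} at which action i is selected. Then for any function f from {0,1}^T to [0, M] of the sequence of observed rewards, E_i[f(r)] ≤ E_unif[f(r)] + (M/2)·√( −E_unif[N_i]·ln(1−4ε²)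 ). -/
/-!
Model of a (possibly randomized) observation strategy over `K` actions and
`T` rounds.  At each round the strategy selects an action as a (randomized)
function of the previously observed binary reward values; the observed value
at a round where action `a` is selected is `Bernoulli(q a)`, independently
across rounds.  We compute expectations by recursion over the rounds: the
history is the list of observed values so far.
-/

/-- `obsExp K q S f r h` is the expectation of `f` applied to the full
sequence of observed values, when `r` rounds remain, the values observed so
far are `h`, the strategy is `S` (a distribution over selected actions for
each history of observed values) and the observed value at a round where
action `a` is selected is `Bernoulli(q a)`. -/
noncomputable def obsExp (K : ℕ) (q : Fin K → ℝ) (S : List Bool → Fin K → ℝ)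
    (f : List Bool → ℝ) : ℕ → List Bool → ℝ
  | 0, h => f h
  | r + 1, h =>
      ∑ a : Fin K, S h a *
        (q a * obsExp K q S f r (h ++ [true]) +
          (1 - q a) * obsExp K q S f r (h ++ [false]))

/-- `obsCount K q S i r h` is the expected number of rounds at which action
`i` is selected among the `r` remaining rounds, in the same model. -/
noncomputable def obsCount (K : ℕ) (q : Fin K → ℝ) (S : List Bool → Fin K → ℝ)
    (i : Fin K) : ℕ → List Bool → ℝ
  | 0, _ => 0
  | r + 1, h =>
      ∑ a : Fin K, S h a *
        ((if a = i then (1 : ℝ) else 0) +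
          q a * obsCount K q S i r (h ++ [true]) +
          (1 - q a) * obsCount K q S i r (h ++ [false]))

open Finset

namespace ObsKL

noncomputable def W (β : List Bool → ℝ) : List Bool → List Bool → ℝ
  | _, [] => 1
  | h, b :: s => (if b then β h else 1 - β h) * W β (h ++ [b]) s

def L : ℕ → Finset (List Bool)
  | 0 => {[]}
  | n + 1 => (L n).image (List.cons true) ∪ (L n).image (List.cons false)

lemma length_of_mem_L : ∀ {n : ℕ} {s : List Bool}, s ∈ L n → s.length = n := by
  intro n
  induction n with
  | zero => intro s hs; simp [L] at hs; simp [hs]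
  | succ n ih =>
    intro s hs
    simp only [L, Finset.mem_union, Finset.mem_image] at hs
    rcases hs with ⟨t, ht, rfl⟩ | ⟨t, ht, rfl⟩ <;> simp [ih ht]

lemma sum_L_succ (n : ℕ) (g : List Bool → ℝ) :
    ∑ s ∈ L (n + 1), g s = ∑ s ∈ L n, (g (true :: s) + g (false :: s)) := by
  have hdisj : Disjoint ((L n).image (List.cons true)) ((L n).image (List.cons false)) := by
    rw [Finset.disjoint_left]
    intro a ha hb
    obtain ⟨t, _, rfl⟩ := Finset.mem_image.1 ha
    obtain ⟨u, _, h⟩ := Finset.mem_image.1 hb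
    simp at h
  rw [show L (n + 1) = (L n).image (List.cons true) ∪ (L n).image (List.cons false) from rfl,
    Finset.sum_union hdisj, Finset.sum_image (by intros; simpa using ‹true :: _ = true :: _›),
    Finset.sum_image (by intros; simpa using ‹false :: _ = false :: _›),
    ← Finset.sum_add_distrib]

lemma sum_W (β : List Bool → ℝ) : ∀ (n : ℕ) (h : List Bool), ∑ s ∈ L n, W β h s = 1 := by
  intro n
  induction n with
  | zero => intro h; simp [L, W]
  | succ n ih =>
    intro h
    rw [sum_L_succ]
    have : ∀ s ∈ L n, W β h (true :: s) + W β h (false :: s)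
        = β h * W β (h ++ [true]) s + (1 - β h) * W β (h ++ [false]) s := by
      intro s _; simp [W]
    rw [Finset.sum_congr rfl this, Finset.sum_add_distrib, ← Finset.mul_sum, ← Finset.mul_sum,
      ih, ih]
    ring

lemma W_pos {β : List Bool → ℝ} (hβ : ∀ h, 0 < β h ∧ β h < 1) :
    ∀ (s h : List Bool), 0 < W β h s := by
  intro s
  induction s with
  | nil => intro h; simp [W]
  | cons b t ih =>
    intro h
    have h1 := (hβ h).1
    have h2 := (hβ h).2
    cases b <;> simp only [W, if_true, if_false] <;>
      exact mul_pos (by simpa using by linarith) (ih _)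

lemma obsExp_eq_sum (K : ℕ) (q : Fin K → ℝ) (S : List Bool → Fin K → ℝ)
    (hS1 : ∀ h, ∑ a, S h a = 1) (f : List Bool → ℝ) :
    ∀ (r : ℕ) (h : List Bool),
      obsExp K q S f r h = ∑ s ∈ L r, W (fun h' => ∑ a, S h' a * q a) h s * f (h ++ s) := by
  intro r
  induction r with
  | zero => intro h; simp [obsExp, L, W]
  | succ r ih =>
    intro h
    set β : List Bool → ℝ := fun h' => ∑ a, S h' a * q a with hβ
    have expand : obsExp K q S f (r + 1) h
        = β h * obsExp K q S f r (h ++ [true])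
          + (1 - β h) * obsExp K q S f r (h ++ [false]) := by
      simp only [obsExp]
      set X := obsExp K q S f r (h ++ [true])
      set Y := obsExp K q S f r (h ++ [false])
      have e : ∀ a ∈ (univ : Finset (Fin K)), S h a * (q a * X + (1 - q a) * Y)
          = S h a * q a * X + (S h a - S h a * q a) * Y := fun a _ => by ring
      rw [Finset.sum_congr rfl e, Finset.sum_add_distrib, ← Finset.sum_mul, ← Finset.sum_mul,
        Finset.sum_sub_distrib, hS1 h]
    rw [expand, ih, ih, sum_L_succ]
    have e : ∀ s ∈ L r,
        W β h (true :: s) * f (h ++ true :: s) + W β h (false :: s) * f (h ++ false :: s)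
        = β h * (W β (h ++ [true]) s * f ((h ++ [true]) ++ s))
          + (1 - β h) * (W β (h ++ [false]) s * f ((h ++ [false]) ++ s)) := by
      intro s _
      norm_num [W, List.append_assoc]
      ring
    rw [Finset.sum_congr rfl e, Finset.sum_add_distrib, ← Finset.mul_sum, ← Finset.mul_sum]

lemma obsCount_unif_succ (K : ℕ) (S : List Bool → Fin K → ℝ) (hS1 : ∀ h, ∑ a, S h a = 1)
    (i : Fin K) (r : ℕ) (h : List Bool) :
    obsCount K (fun _ => (1 : ℝ) / 2) S i (r + 1) h
      = S h i + (1 / 2) * obsCount K (fun _ => (1 : ℝ) / 2) S i r (h ++ [true])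
        + (1 / 2) * obsCount K (fun _ => (1 : ℝ) / 2) S i r (h ++ [false]) := by
  simp only [obsCount]
  set X := obsCount K (fun _ => (1 : ℝ) / 2) S i r (h ++ [true])
  set Y := obsCount K (fun _ => (1 : ℝ) / 2) S i r (h ++ [false])
  have e : ∀ a ∈ (univ : Finset (Fin K)),
      S h a * ((if a = i then (1 : ℝ) else 0) + 1 / 2 * X + (1 - 1 / 2) * Y)
      = (if a = i then S h a else 0) + S h a * (1 / 2 * X + 1 / 2 * Y) := by
    intro a _; split <;> ring
  rw [Finset.sum_congr rfl e, Finset.sum_add_distrib, Finset.sum_ite_eq' univ i (fun a => S h a),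
    ← Finset.sum_mul, hS1 h]
  simp; ring

lemma obsCount_unif_nonneg (K : ℕ) (S : List Bool → Fin K → ℝ) (hS0 : ∀ h a, 0 ≤ S h a)
    (i : Fin K) : ∀ (r : ℕ) (h : List Bool), 0 ≤ obsCount K (fun _ => (1 : ℝ) / 2) S i r h := by
  intro r
  induction r with
  | zero => intro h; simp [obsCount]
  | succ r ih =>
    intro h
    simp only [obsCount]
    refine Finset.sum_nonneg fun a _ => mul_nonneg (hS0 h a) ?_
    have h1 := ih (h ++ [true])
    have h2 := ih (h ++ [false])
    have h3 : (0 : ℝ) ≤ if a = i then (1 : ℝ) else 0 := by split <;> norm_num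
    nlinarith

lemma beta_i (K : ℕ) (S : List Bool → Fin K → ℝ) (hS1 : ∀ h, ∑ a, S h a = 1) (i : Fin K)
    (ε : ℝ) (h : List Bool) :
    ∑ a, S h a * (if a = i then 1 / 2 + ε else 1 / 2) = 1 / 2 + ε * S h i := by
  have e : ∀ a ∈ (univ : Finset (Fin K)), S h a * (if a = i then 1 / 2 + ε else 1 / 2)
      = S h a * (1 / 2) + (if a = i then ε * S h a else 0) := by
    intro a _; split <;> ring
  rw [Finset.sum_congr rfl e, Finset.sum_add_distrib, ← Finset.sum_mul, hS1 h,
    Finset.sum_ite_eq' univ i (fun a => ε * S h a)]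
  simp

lemma beta_u (K : ℕ) (S : List Bool → Fin K → ℝ) (hS1 : ∀ h, ∑ a, S h a = 1) (h : List Bool) :
    ∑ a, S h a * ((1 : ℝ) / 2) = 1 / 2 := by
  rw [← Finset.sum_mul, hS1 h, one_mul]


lemma kl_step {ε s : ℝ} (hε0 : 0 < ε) (hε1 : ε < 1/2) (hs0 : 0 ≤ s) (hs1 : s ≤ 1) :
    (1/2) * Real.log ((1/2) / (1/2 + ε*s)) + (1/2) * Real.log ((1/2) / (1/2 - ε*s))
      ≤ s * (-(1/2) * Real.log (1 - 4*ε^2)) := by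
  have hA : (0:ℝ) < 1/2 + ε*s := by nlinarith
  have hB : (0:ℝ) < 1/2 - ε*s := by nlinarith
  have h1 : (0:ℝ) < 1 - 4*ε^2 := by nlinarith
  have h2 : (0:ℝ) < 1 - 4*ε^2*s := by nlinarith
  have h3 : (0:ℝ) < 1 - 4*ε^2*s^2 := by nlinarith
  have hprod : 1 - 4*ε^2*s^2 = 4*((1/2 + ε*s) * (1/2 - ε*s)) := by ring
  have hlog4 : Real.log 4 = 2 * Real.log 2 := by
    rw [show (4:ℝ) = 2^2 by norm_num, Real.log_pow]
    push_cast; ring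
  have hLHS : (1/2) * Real.log ((1/2) / (1/2 + ε*s)) + (1/2) * Real.log ((1/2) / (1/2 - ε*s))
      = -(1/2) * Real.log (1 - 4*ε^2*s^2) := by
    rw [Real.log_div (by norm_num) (ne_of_gt hA), Real.log_div (by norm_num) (ne_of_gt hB),
      hprod, Real.log_mul (by norm_num) (ne_of_gt (mul_pos hA hB)),
      Real.log_mul (ne_of_gt hA) (ne_of_gt hB), hlog4,
      show ((1:ℝ)/2) = 2⁻¹ by norm_num, Real.log_inv]
    ring
  rw [hLHS]
  have hconc := (strictConcaveOn_log_Ioi.concaveOn).2 (Set.mem_Ioi.2 h1)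
    (Set.mem_Ioi.2 one_pos) hs0 (by linarith : (0:ℝ) ≤ 1 - s) (by ring)
  rw [smul_eq_mul, smul_eq_mul, smul_eq_mul, smul_eq_mul] at hconc
  have e1 : s * (1 - 4*ε^2) + (1 - s) * (1:ℝ) = 1 - 4*ε^2*s := by ring
  rw [e1, Real.log_one, mul_zero, add_zero] at hconc
  have hmono : Real.log (1 - 4*ε^2*s) ≤ Real.log (1 - 4*ε^2*s^2) :=
    Real.log_le_log h2 (by nlinarith [mul_nonneg hs0 (sub_nonneg.2 hs1)])
  linarith

lemma log_sum_group {α : Type*} (A : Finset α) (p q : α → ℝ)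
    (hp : ∀ s ∈ A, 0 < p s) (hq : ∀ s ∈ A, 0 < q s) :
    (∑ s ∈ A, q s) * Real.log ((∑ s ∈ A, q s) / (∑ s ∈ A, p s))
      ≤ ∑ s ∈ A, q s * Real.log (q s / p s) := by
  obtain rfl | hA := A.eq_empty_or_nonempty
  · simp
  set Q := ∑ s ∈ A, q s with hQdef
  set P := ∑ s ∈ A, p s with hPdef
  have hQ : 0 < Q := Finset.sum_pos hq hA
  have hP : 0 < P := Finset.sum_pos hp hA
  have key : ∀ s ∈ A, q s - p s * (Q / P)
      ≤ q s * Real.log (q s / p s) - q s * Real.log (Q / P) := by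
    intro s hs
    have hps := hp s hs
    have hqs := hq s hs
    have ht : (0:ℝ) < (q s * P) / (p s * Q) := by positivity
    have hlog := Real.log_le_sub_one_of_pos (inv_pos.2 ht)
    rw [Real.log_inv] at hlog
    have e : Real.log ((q s * P) / (p s * Q)) = Real.log (q s / p s) - Real.log (Q / P) := by
      rw [show (q s * P) / (p s * Q) = (q s / p s) / (Q / P) by field_simp,
        Real.log_div (by positivity) (by positivity)]
    rw [e] at hlog
    rw [show ((q s * P) / (p s * Q))⁻¹ = (p s * Q) / (q s * P) from inv_div _ _] at hlog
    have h5 : q s * (1 - (p s * Q)/(q s * P)) ≤ q s * (Real.log (q s/p s) - Real.log (Q/P)) :=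
      mul_le_mul_of_nonneg_left (by linarith) hqs.le
    have e2 : q s * (1 - (p s * Q)/(q s * P)) = q s - p s * (Q/P) := by field_simp
    rw [e2, mul_sub] at h5
    linarith
  have hsum := Finset.sum_le_sum key
  rw [Finset.sum_sub_distrib, Finset.sum_sub_distrib, ← Finset.sum_mul, ← Finset.sum_mul,
    ← hQdef, ← hPdef] at hsum
  have e3 : P * (Q / P) = Q := by field_simp
  rw [e3] at hsum
  linarith

lemma bern_pinsker {p q : ℝ} (hp0 : 0 < p) (hp1 : p < 1) (hq0 : 0 < q) (hq1 : q < 1) :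
    2 * (q - p)^2 ≤ q * Real.log (q / p) + (1 - q) * Real.log ((1 - q) / (1 - p)) := by
  set g : ℝ → ℝ := fun x => q * Real.log q + (1 - q) * Real.log (1 - q)
    - q * Real.log x - (1 - q) * Real.log (1 - x) - 2 * (q - x)^2 with hg
  have hgq : g q = 0 := by simp only [hg]; ring
  have hderiv : ∀ x ∈ Set.Ioo (0:ℝ) 1,
      HasDerivAt g ((x - q) * (1 - 2*x)^2 / (x * (1 - x))) x := by
    intro x hx
    obtain ⟨hx0, hx1⟩ := hx
    have h1x : (0:ℝ) < 1 - x := by linarith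
    have d1 : HasDerivAt (fun x : ℝ => q * Real.log x) (q * x⁻¹) x :=
      (Real.hasDerivAt_log (ne_of_gt hx0)).const_mul q
    have d2' : HasDerivAt (fun x : ℝ => 1 - x) (-1) x := (hasDerivAt_id x).const_sub 1
    have d2 : HasDerivAt (fun x : ℝ => (1 - q) * Real.log (1 - x)) ((1 - q) * (-1 / (1 - x))) x :=
      (d2'.log (ne_of_gt h1x)).const_mul (1 - q)
    have d3' : HasDerivAt (fun x : ℝ => q - x) (-1) x := (hasDerivAt_id x).const_sub q
    have d3 : HasDerivAt (fun x : ℝ => 2 * (q - x)^2) (2 * (2 * (q - x)^1 * (-1))) x :=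
      (d3'.pow 2).const_mul 2
    have dg := (((hasDerivAt_const x (q * Real.log q + (1 - q) * Real.log (1 - q))).sub
      d1).sub d2).sub d3
    have : g = fun x => q * Real.log q + (1 - q) * Real.log (1 - q)
        - q * Real.log x - (1 - q) * Real.log (1 - x) - 2 * (q - x)^2 := hg
    rw [this]
    refine dg.congr_deriv ?_
    field_simp
    ring
  have hint : ∀ x ∈ Set.Icc (min p q) (max p q), x ∈ Set.Ioo (0:ℝ) 1 := by
    intro x hx
    constructor
    · exact lt_of_lt_of_le (lt_min hp0 hq0) hx.1
    · exact lt_of_le_of_lt hx.2 (max_lt hp1 hq1)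
  have hgp : 0 ≤ g p := by
    rcases le_or_gt q p with hqp | hpq
    · have mono : MonotoneOn g (Set.Icc q p) := by
        apply monotoneOn_of_deriv_nonneg (convex_Icc q p)
        · intro x hx
          have hx01 : x ∈ Set.Ioo (0:ℝ) 1 :=
            ⟨lt_of_lt_of_le hq0 hx.1, lt_of_le_of_lt hx.2 hp1⟩
          exact (hderiv x hx01).continuousAt.continuousWithinAt
        · intro x hx
          rw [interior_Icc] at hx
          have hx01 : x ∈ Set.Ioo (0:ℝ) 1 := ⟨hq0.trans hx.1, hx.2.trans hp1⟩
          exact (hderiv x hx01).differentiableAt.differentiableWithinAt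
        · intro x hx
          rw [interior_Icc] at hx
          have hx01 : x ∈ Set.Ioo (0:ℝ) 1 := ⟨hq0.trans hx.1, hx.2.trans hp1⟩
          rw [(hderiv x hx01).deriv]
          have h1x : (0:ℝ) < 1 - x := by linarith [hx01.2]
          exact div_nonneg (mul_nonneg (by linarith [hx.1]) (sq_nonneg _))
            (mul_pos hx01.1 h1x).le
      have := mono (Set.left_mem_Icc.2 hqp) (Set.right_mem_Icc.2 hqp) hqp
      linarith [hgq ▸ this]
    · have anti : AntitoneOn g (Set.Icc p q) := by
        apply antitoneOn_of_deriv_nonpos (convex_Icc p q)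
        · intro x hx
          have hx01 : x ∈ Set.Ioo (0:ℝ) 1 :=
            ⟨lt_of_lt_of_le hp0 hx.1, lt_of_le_of_lt hx.2 hq1⟩
          exact (hderiv x hx01).continuousAt.continuousWithinAt
        · intro x hx
          rw [interior_Icc] at hx
          have hx01 : x ∈ Set.Ioo (0:ℝ) 1 := ⟨hp0.trans hx.1, hx.2.trans hq1⟩
          exact (hderiv x hx01).differentiableAt.differentiableWithinAt
        · intro x hx
          rw [interior_Icc] at hx
          have hx01 : x ∈ Set.Ioo (0:ℝ) 1 := ⟨hp0.trans hx.1, hx.2.trans hq1⟩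
          rw [(hderiv x hx01).deriv]
          have h1x : (0:ℝ) < 1 - x := by linarith [hx01.2]
          have hnum : (x - q) * (1 - 2*x)^2 ≤ 0 :=
            mul_nonpos_of_nonpos_of_nonneg (by linarith [hx.2]) (sq_nonneg _)
          exact div_nonpos_of_nonpos_of_nonneg hnum (mul_pos hx01.1 h1x).le
      have := anti (Set.left_mem_Icc.2 hpq.le) (Set.right_mem_Icc.2 hpq.le) hpq.le
      linarith [hgq ▸ this]
  have e : g p = q * Real.log (q / p) + (1 - q) * Real.log ((1 - q) / (1 - p)) - 2 * (q - p)^2 := by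
    rw [hg]
    rw [Real.log_div (ne_of_gt hq0) (ne_of_gt hp0),
      Real.log_div (by linarith : (1:ℝ) - q ≠ 0) (by linarith : (1:ℝ) - p ≠ 0)]
    ring
  linarith [e ▸ hgp]

lemma kl_sum_succ (βu βi : List Bool → ℝ) (hβu : ∀ h', 0 < βu h' ∧ βu h' < 1)
    (hβi : ∀ h', 0 < βi h' ∧ βi h' < 1) (r : ℕ) (h : List Bool) :
    ∑ s ∈ L (r + 1), W βu h s * Real.log (W βu h s / W βi h s)
      = βu h * Real.log (βu h / βi h) + (1 - βu h) * Real.log ((1 - βu h) / (1 - βi h))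
        + βu h * ∑ s ∈ L r, W βu (h ++ [true]) s *
            Real.log (W βu (h ++ [true]) s / W βi (h ++ [true]) s)
        + (1 - βu h) * ∑ s ∈ L r, W βu (h ++ [false]) s *
            Real.log (W βu (h ++ [false]) s / W βi (h ++ [false]) s) := by
  rw [sum_L_succ]
  have h1 := (hβu h).1
  have h2 := (hβu h).2
  have h3 := (hβi h).1
  have h4 := (hβi h).2
  have e : ∀ s ∈ L r,
      W βu h (true :: s) * Real.log (W βu h (true :: s) / W βi h (true :: s))
      + W βu h (false :: s) * Real.log (W βu h (false :: s) / W βi h (false :: s))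
      = (βu h * Real.log (βu h / βi h)) * W βu (h ++ [true]) s
        + βu h * (W βu (h ++ [true]) s *
            Real.log (W βu (h ++ [true]) s / W βi (h ++ [true]) s))
        + ((1 - βu h) * Real.log ((1 - βu h) / (1 - βi h))) * W βu (h ++ [false]) s
        + (1 - βu h) * (W βu (h ++ [false]) s *
            Real.log (W βu (h ++ [false]) s / W βi (h ++ [false]) s)) := by
    intro s _
    have puT := W_pos hβu s (h ++ [true])
    have piT := W_pos hβi s (h ++ [true])
    have puF := W_pos hβu s (h ++ [false])
    have piF := W_pos hβi s (h ++ [false])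
    simp only [W, eq_self_iff_true, Bool.false_eq_true, if_true, if_false]
    rw [mul_div_mul_comm, Real.log_mul (div_pos h1 h3).ne' (div_pos puT piT).ne',
      mul_div_mul_comm,
      Real.log_mul (div_pos (by linarith) (by linarith)).ne' (div_pos puF piF).ne']
    ring
  rw [Finset.sum_congr rfl e]
  simp only [Finset.sum_add_distrib, ← Finset.mul_sum]
  rw [sum_W, sum_W]
  ring

lemma kl_le_count (K : ℕ) (S : List Bool → Fin K → ℝ) (hS0 : ∀ h a, 0 ≤ S h a)
    (hS1 : ∀ h, ∑ a, S h a = 1) (i : Fin K) {ε : ℝ} (hε0 : 0 < ε) (hε1 : ε < 1 / 2) :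
    ∀ (r : ℕ) (h : List Bool),
      ∑ s ∈ L r, W (fun _ => (1 : ℝ) / 2) h s *
          Real.log (W (fun _ => (1 : ℝ) / 2) h s / W (fun h' => 1 / 2 + ε * S h' i) h s)
        ≤ (-(1 / 2) * Real.log (1 - 4 * ε ^ 2)) * obsCount K (fun _ => (1 : ℝ) / 2) S i r h := by
  have hSle1 : ∀ h', S h' i ≤ 1 := by
    intro h'
    have := Finset.single_le_sum (f := S h') (fun a _ => hS0 h' a) (Finset.mem_univ i)
    rw [hS1 h'] at this
    exact this
  have hu : ∀ h' : List Bool, 0 < ((1 : ℝ) / 2) ∧ ((1 : ℝ) / 2) < 1 := fun _ => by norm_num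
  have hib : ∀ h', 0 < 1 / 2 + ε * S h' i ∧ 1 / 2 + ε * S h' i < 1 := by
    intro h'
    constructor
    · nlinarith [hS0 h' i]
    · nlinarith [hS0 h' i, hSle1 h']
  intro r
  induction r with
  | zero =>
    intro h
    simp [L, W, obsCount]
  | succ r ih =>
    intro h
    rw [obsCount_unif_succ K S hS1 i r h,
      kl_sum_succ (fun _ => (1 : ℝ) / 2) (fun h' => 1 / 2 + ε * S h' i)
        (fun h' => hu h') hib r h]
    have hstep := kl_step hε0 hε1 (hS0 h i) (hSle1 h)
    have hT := ih (h ++ [true])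
    have hF := ih (h ++ [false])
    have e2 : (1 : ℝ) - (1 / 2 + ε * S h i) = 1 / 2 - ε * S h i := by ring
    rw [e2]
    have e3 : (1 : ℝ) - 1 / 2 = 1 / 2 := by norm_num
    rw [e3]
    set c : ℝ := -(1 / 2) * Real.log (1 - 4 * ε ^ 2)
    linarith



lemma exp_diff_le_tv {α : Type*} (V : Finset α) (p q f : α → ℝ) (M : ℝ)
    (hf : ∀ s ∈ V, 0 ≤ f s ∧ f s ≤ M)
    (hsp : ∑ s ∈ V, p s = 1) (hsq : ∑ s ∈ V, q s = 1) :
    (∑ s ∈ V, p s * f s) - (∑ s ∈ V, q s * f s) ≤ M / 2 * ∑ s ∈ V, |p s - q s| := by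
  have e : ∀ s ∈ V, p s * f s - q s * f s
      = (p s - q s) * (f s - M / 2) + (M / 2) * (p s - q s) := fun s _ => by ring
  have hterm : ∀ s ∈ V, (p s - q s) * (f s - M / 2) ≤ |p s - q s| * (M / 2) := by
    intro s hs
    have hfs := hf s hs
    calc (p s - q s) * (f s - M / 2) ≤ |(p s - q s) * (f s - M / 2)| := le_abs_self _
      _ = |p s - q s| * |f s - M / 2| := abs_mul _ _
      _ ≤ |p s - q s| * (M / 2) :=
          mul_le_mul_of_nonneg_left
            (abs_le.2 ⟨by linarith [hfs.1], by linarith [hfs.2]⟩) (abs_nonneg _)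
  have h1 : (∑ s ∈ V, p s * f s) - (∑ s ∈ V, q s * f s)
      = ∑ s ∈ V, ((p s - q s) * (f s - M / 2) + (M / 2) * (p s - q s)) := by
    rw [← Finset.sum_congr rfl e, Finset.sum_sub_distrib]
  rw [h1, Finset.sum_add_distrib, ← Finset.mul_sum, Finset.sum_sub_distrib, hsp, hsq,
    sub_self, mul_zero, add_zero]
  calc ∑ s ∈ V, (p s - q s) * (f s - M / 2)
      ≤ ∑ s ∈ V, |p s - q s| * (M / 2) := Finset.sum_le_sum hterm
    _ = M / 2 * ∑ s ∈ V, |p s - q s| := by rw [← Finset.sum_mul]; ring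

lemma tv_le_sqrt_kl {α : Type*} [DecidableEq α] (V : Finset α) (p q : α → ℝ) (κ : ℝ)
    (hp : ∀ s, 0 < p s) (hq : ∀ s, 0 < q s)
    (hsp : ∑ s ∈ V, p s = 1) (hsq : ∑ s ∈ V, q s = 1)
    (hKL : ∑ s ∈ V, q s * Real.log (q s / p s) ≤ κ) :
    ∑ s ∈ V, |p s - q s| ≤ Real.sqrt (2 * κ) := by
  classical
  set A : Finset α := V.filter (fun s => q s < p s) with hA_def
  set B : Finset α := V.filter (fun s => ¬ q s < p s) with hB_def
  have hpart_p : (∑ s ∈ A, p s) + (∑ s ∈ B, p s) = 1 := by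
    rw [Finset.sum_filter_add_sum_filter_not]; exact hsp
  have hpart_q : (∑ s ∈ A, q s) + (∑ s ∈ B, q s) = 1 := by
    rw [Finset.sum_filter_add_sum_filter_not]; exact hsq
  set δ : ℝ := (∑ s ∈ A, p s) - (∑ s ∈ A, q s) with hδ_def
  have hTV : ∑ s ∈ V, |p s - q s| = 2 * δ := by
    rw [← Finset.sum_filter_add_sum_filter_not V (fun s => q s < p s) (fun s => |p s - q s|)]
    have eA : ∀ s ∈ A, |p s - q s| = p s - q s := by
      intro s hs
      have := (Finset.mem_filter.1 hs).2
      exact abs_of_pos (by linarith)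
    have eB : ∀ s ∈ B, |p s - q s| = q s - p s := by
      intro s hs
      have := (Finset.mem_filter.1 hs).2
      rw [abs_sub_comm]
      exact abs_of_nonneg (by linarith [not_lt.1 this])
    rw [Finset.sum_congr rfl eA, Finset.sum_congr rfl eB, Finset.sum_sub_distrib,
      Finset.sum_sub_distrib]
    simp only [hδ_def]
    linarith
  rw [hTV]
  rcases le_or_gt δ 0 with hδ0 | hδ0
  · calc 2 * δ ≤ 0 := by linarith
      _ ≤ _ := Real.sqrt_nonneg _
  · have hAne : A.Nonempty := by
      by_contra hcon
      rw [Finset.not_nonempty_iff_eq_empty] at hcon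
      rw [hδ_def, hcon] at hδ0
      simp at hδ0
    have hBne : B.Nonempty := by
      by_contra hcon
      rw [Finset.not_nonempty_iff_eq_empty] at hcon
      rw [hcon] at hpart_p hpart_q
      simp at hpart_p hpart_q
      rw [hδ_def, hpart_p, hpart_q] at hδ0
      simp at hδ0
    have hPA : 0 < ∑ s ∈ A, p s := Finset.sum_pos (fun s _ => hp s) hAne
    have hQA : 0 < ∑ s ∈ A, q s := Finset.sum_pos (fun s _ => hq s) hAne
    have hPB : 0 < ∑ s ∈ B, p s := Finset.sum_pos (fun s _ => hp s) hBne
    have hQB : 0 < ∑ s ∈ B, q s := Finset.sum_pos (fun s _ => hq s) hBne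
    have hPA1 : ∑ s ∈ A, p s < 1 := by linarith
    have hQA1 : ∑ s ∈ A, q s < 1 := by linarith
    have hpinsker := bern_pinsker hPA hPA1 hQA hQA1
    have hlsA := log_sum_group A p q (fun s _ => hp s) (fun s _ => hq s)
    have hlsB := log_sum_group B p q (fun s _ => hp s) (fun s _ => hq s)
    have hsplit : ∑ s ∈ V, q s * Real.log (q s / p s)
        = (∑ s ∈ A, q s * Real.log (q s / p s)) + (∑ s ∈ B, q s * Real.log (q s / p s)) :=
      (Finset.sum_filter_add_sum_filter_not V (fun s => q s < p s) _).symm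
    have eQB : (∑ s ∈ B, q s) = 1 - ∑ s ∈ A, q s := by linarith
    have ePB : (∑ s ∈ B, p s) = 1 - ∑ s ∈ A, p s := by linarith
    rw [eQB, ePB] at hlsB
    have hKL2 : 2 * ((∑ s ∈ A, q s) - (∑ s ∈ A, p s)) ^ 2 ≤ κ := by
      calc 2 * ((∑ s ∈ A, q s) - (∑ s ∈ A, p s)) ^ 2
          ≤ (∑ s ∈ A, q s) * Real.log ((∑ s ∈ A, q s) / (∑ s ∈ A, p s))
            + (1 - ∑ s ∈ A, q s) * Real.log ((1 - ∑ s ∈ A, q s) / (1 - ∑ s ∈ A, p s)) :=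
            hpinsker
        _ ≤ (∑ s ∈ A, q s * Real.log (q s / p s))
            + (∑ s ∈ B, q s * Real.log (q s / p s)) := by linarith
        _ = ∑ s ∈ V, q s * Real.log (q s / p s) := hsplit.symm
        _ ≤ κ := hKL
    have hsq2 : (2 * δ) ^ 2 ≤ 2 * κ := by
      have e2 : ((∑ s ∈ A, q s) - (∑ s ∈ A, p s)) ^ 2 = δ ^ 2 := by
        rw [hδ_def]; ring
      rw [e2] at hKL2
      nlinarith
    calc 2 * δ = Real.sqrt ((2 * δ) ^ 2) := (Real.sqrt_sq (by linarith)).symm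
      _ ≤ Real.sqrt (2 * κ) := Real.sqrt_le_sqrt hsq2

end ObsKL

/-- under the law `P_i` the observed value at a round where
action `i` is selected is `Bernoulli(1/2+ε)` and at any other round
`Bernoulli(1/2)`; under `P_unif` every observed value is `Bernoulli(1/2)`.
For any function `f` of the sequence of observed rewards with values in
`[0,M]`,
`E_i[f(r)] ≤ E_unif[f(r)] + (M/2)·√(−E_unif[N_i]·ln(1−4ε²))`,
where `N_i` is the number of rounds at which action `i` is selected. -/
theorem observation_strategy_kl_bound (K T : ℕ) (hK : 2 ≤ K) (hT : 1 ≤ T)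
    (i : Fin K) (ε : ℝ) (hε0 : 0 < ε) (hε1 : ε < 1 / 2)
    (S : List Bool → Fin K → ℝ)
    (hS0 : ∀ h a, 0 ≤ S h a) (hS1 : ∀ h, ∑ a, S h a = 1)
    (M : ℝ) (f : List Bool → ℝ)
    (hf : ∀ l : List Bool, l.length = T → 0 ≤ f l ∧ f l ≤ M) :
    obsExp K (fun a => if a = i then 1 / 2 + ε else 1 / 2) S f T [] ≤
      obsExp K (fun _ => 1 / 2) S f T [] +
        M / 2 *
          Real.sqrt (-(obsCount K (fun _ => 1 / 2) S i T []) *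
            Real.log (1 - 4 * ε ^ 2)) := by
  have hSle1 : ∀ h', S h' i ≤ 1 := by
    intro h'
    have h0 := Finset.single_le_sum (f := S h') (fun a _ => hS0 h' a) (Finset.mem_univ i)
    rw [hS1 h'] at h0
    exact h0
  set u : List Bool → ℝ := fun _ => 1 / 2 with hu_def
  set ib : List Bool → ℝ := fun h => 1 / 2 + ε * S h i with hib_def
  have hu : ∀ h' : List Bool, 0 < u h' ∧ u h' < 1 := fun _ => by norm_num [hu_def]
  have hib : ∀ h', 0 < ib h' ∧ ib h' < 1 := by
    intro h'
    constructor
    · simp only [hib_def]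
      nlinarith [hS0 h' i]
    · simp only [hib_def]
      nlinarith [hS0 h' i, hSle1 h']
  have hEi : obsExp K (fun a => if a = i then 1 / 2 + ε else 1 / 2) S f T []
      = ∑ s ∈ ObsKL.L T, ObsKL.W ib [] s * f s := by
    rw [ObsKL.obsExp_eq_sum K _ S hS1 f T []]
    have hfun : (fun h' => ∑ a, S h' a * (if a = i then 1 / 2 + ε else 1 / 2)) = ib := by
      funext h'
      rw [ObsKL.beta_i K S hS1 i ε h']
    rw [hfun]
    simp
  have hEu : obsExp K (fun _ => (1 : ℝ) / 2) S f T []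
      = ∑ s ∈ ObsKL.L T, ObsKL.W u [] s * f s := by
    rw [ObsKL.obsExp_eq_sum K _ S hS1 f T []]
    have hfun : (fun h' => ∑ a, S h' a * ((1 : ℝ) / 2)) = u := by
      funext h'
      rw [ObsKL.beta_u K S hS1 h']
    rw [hfun]
    simp
  have hKL : ∑ s ∈ ObsKL.L T, ObsKL.W u [] s * Real.log (ObsKL.W u [] s / ObsKL.W ib [] s)
      ≤ (-(1 / 2) * Real.log (1 - 4 * ε ^ 2)) * obsCount K (fun _ => (1 : ℝ) / 2) S i T [] :=
    ObsKL.kl_le_count K S hS0 hS1 i hε0 hε1 T []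
  have hdiff := ObsKL.exp_diff_le_tv (ObsKL.L T) (fun s => ObsKL.W ib [] s)
    (fun s => ObsKL.W u [] s) f M (fun s hs => hf s (ObsKL.length_of_mem_L hs))
    (ObsKL.sum_W ib T []) (ObsKL.sum_W u T [])
  have htv := ObsKL.tv_le_sqrt_kl (ObsKL.L T) (fun s => ObsKL.W ib [] s)
    (fun s => ObsKL.W u [] s)
    ((-(1 / 2) * Real.log (1 - 4 * ε ^ 2)) * obsCount K (fun _ => (1 : ℝ) / 2) S i T [])
    (fun s => ObsKL.W_pos hib s []) (fun s => ObsKL.W_pos hu s [])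
    (ObsKL.sum_W ib T []) (ObsKL.sum_W u T []) hKL
  have hM0 : 0 ≤ M := by
    have h00 := hf (List.replicate T true) (by simp)
    linarith [h00.1, h00.2]
  have hmul := mul_le_mul_of_nonneg_left htv (by linarith : (0 : ℝ) ≤ M / 2)
  have esqrt : 2 * ((-(1 / 2) * Real.log (1 - 4 * ε ^ 2))
        * obsCount K (fun _ => (1 : ℝ) / 2) S i T [])
      = -(obsCount K (fun _ => 1 / 2) S i T []) * Real.log (1 - 4 * ε ^ 2) := by
    ring
  rw [esqrt] at hmul
  rw [hEi, hEu]
  linarith [hdiff, hmul]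
end

section
/- For every real number x ≤ 1, one has exp(x) ≤ 1 + x + (e−2)·x², where e is Euler's number. -/
lemma exp_eq_tsum_aux (x : ℝ) : Real.exp x = ∑' n : ℕ, x ^ n / n.factorial := by
  rw [Real.exp_eq_exp_ℝ, NormedSpace.exp_eq_tsum_div]

lemma exp_split_aux (x : ℝ) :
    Real.exp x = 1 + x + ∑' n : ℕ, x ^ (n + 2) / (n + 2).factorial := by
  rw [exp_eq_tsum_aux,
    ← (Real.summable_pow_div_factorial x).sum_add_tsum_nat_add 2]
  norm_num [Finset.sum_range_succ]

set_option maxHeartbeats 1000000 in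
lemma exp_le_nonneg_aux (x : ℝ) (h0 : 0 ≤ x) (hx : x ≤ 1) :
    Real.exp x ≤ 1 + x + (Real.exp 1 - 2) * x ^ 2 := by
  have h1 : Real.exp 1 - 2 = ∑' n : ℕ, (1 : ℝ) ^ (n + 2) / (n + 2).factorial := by
    have := exp_split_aux 1; linarith
  have hsum1 : Summable (fun n : ℕ => (1:ℝ) ^ (n + 2) / (n + 2).factorial) :=
    (summable_nat_add_iff 2).mpr (Real.summable_pow_div_factorial 1)
  have hsumx : Summable (fun n : ℕ => x ^ (n + 2) / (n + 2).factorial) :=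
    (summable_nat_add_iff 2).mpr (Real.summable_pow_div_factorial x)
  have key : (∑' n : ℕ, x ^ (n + 2) / (n + 2).factorial)
      ≤ x ^ 2 * ∑' n : ℕ, (1:ℝ) ^ (n + 2) / (n + 2).factorial := by
    rw [← tsum_mul_left]
    refine Summable.tsum_le_tsum (fun n => ?_) hsumx (hsum1.mul_left _)
    simp only [one_pow, mul_one_div]
    have hp : x ^ (n + 2) ≤ x ^ 2 := pow_le_pow_of_le_one h0 hx (by omega)
    exact div_le_div_of_nonneg_right hp (by positivity)
  have := exp_split_aux x
  nlinarith [key, this, h1]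

lemma exp_le_neg_aux (x : ℝ) (h0 : x ≤ 0) :
    Real.exp x ≤ 1 + x + (Real.exp 1 - 2) * x ^ 2 := by
  have he : (2.7182818283 : ℝ) < Real.exp 1 := Real.exp_one_gt_d9
  rcases le_or_gt x (-1) with h1 | h1
  · have h2 : Real.exp x ≤ Real.exp (-1) := Real.exp_le_exp.mpr h1
    have h3 : Real.exp (-1) ≤ 1/2 := by
      rw [Real.exp_neg]
      calc (Real.exp 1)⁻¹ ≤ 2⁻¹ := by
            apply inv_anti₀ (by norm_num); linarith
        _ = 1/2 := by norm_num
    nlinarith [sq_nonneg (2 * (Real.exp 1 - 2) * x + 1), sq_nonneg x]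
  · have hb := Real.exp_bound (x := x) (by rw [abs_le]; constructor <;> linarith) (n := 4) (by norm_num)
    simp only [Finset.sum_range_succ, Finset.sum_range_zero, Nat.factorial] at hb
    norm_num at hb
    have habs : |x| ^ 4 ≤ x ^ 2 := by
      have : |x| ≤ 1 := by rw [abs_le]; constructor <;> linarith
      calc |x| ^ 4 ≤ |x| ^ 2 := pow_le_pow_of_le_one (abs_nonneg x) this (by omega)
        _ = x ^ 2 := sq_abs x
    have hx3 : x ^ 3 ≤ 0 := by nlinarith [sq_nonneg x]
    rw [abs_le] at hb
    nlinarith [sq_nonneg x, hb.2]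

/-- For every real number `x ≤ 1`,
`exp x ≤ 1 + x + (e − 2)·x²`, where `e` is Euler's number. -/
theorem exp_le_one_add_add_sq (x : ℝ) (hx : x ≤ 1) :
    Real.exp x ≤ 1 + x + (Real.exp 1 - 2) * x ^ 2 := by
  rcases le_or_gt 0 x with h | h
  · exact exp_le_nonneg_aux x h hx
  · exact exp_le_neg_aux x h.le
end
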